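/- arXiv:1812.08640 — 3 statements merged into one kernel-verified Lean document; each statement's English description precedes it below -/
import Mathlib

section
/- For every integer d ≥ 7 there exists a full-dimensional polytope P ⊆ ℝ^d that does not have a vertex-facet assignment. -/
set_option maxHeartbeats 1000000


/-- A polytope is the convex hull of a finite set of points. -/
def IsPolytope {V : Type*} [AddCommGroup V] [Module ℝ V] (P : Set V) : Prop :=
  ∃ S : Set V, S.Finite ∧ P = convexHull ℝ S

/-- A face of `Q` is a nonempty proper exposed face of `Q`. -/
def IsFaceOf {V : Type*} [NormedAddCommGroup V] [NormedSpace ℝ V] (Q F : Set V) : Prop :=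
  IsExposed ℝ Q F ∧ F.Nonempty ∧ F ≠ Q

/-- The dimension of a set: the dimension of its affine span. -/
noncomputable def polyDim {V : Type*} [NormedAddCommGroup V] [NormedSpace ℝ V]
    (Q : Set V) : ℕ :=
  Module.finrank ℝ (affineSpan ℝ Q).direction

/-- The facets of a full-dimensional polytope `P ⊆ V`: faces whose affine span has
dimension `dim V - 1`. -/
def ambientFacets {V : Type*} [NormedAddCommGroup V] [NormedSpace ℝ V]
    (P : Set V) : Set (Set V) :=
  {F | IsFaceOf P F ∧ polyDim F = Module.finrank ℝ V - 1}

/-- A vertex-facet assignment: an injective map from vertices (extreme points) to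
non-incident facets, or an injective map from facets to non-incident vertices. -/
def HasVFA {V : Type*} [NormedAddCommGroup V] [NormedSpace ℝ V] (P : Set V) : Prop :=
  (∃ f : (P.extremePoints ℝ) → (ambientFacets P), Function.Injective f ∧
      ∀ v, (v : V) ∉ (f v : Set V)) ∨
  (∃ g : (ambientFacets P) → (P.extremePoints ℝ), Function.Injective g ∧
      ∀ F : (ambientFacets P), (g F : V) ∉ (F : Set V))


variable {E : Type*} [NormedAddCommGroup E] [NormedSpace ℝ E]

lemma hull_le (SF : Finset E) (l : E →ₗ[ℝ] ℝ) (M : ℝ) (hM : ∀ s ∈ SF, l s ≤ M) :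
    ∀ x ∈ convexHull ℝ (SF : Set E), l x ≤ M := by
  intro x hx
  have hc : Convex ℝ {z : E | l z ≤ M} := convex_halfSpace_le ⟨l.map_add, l.map_smul⟩ M
  exact convexHull_min (fun s hs => hM s hs) hc hx

lemma argmax_hull (SF : Finset E) (l : E →ₗ[ℝ] ℝ) (M : ℝ) (hM : ∀ s ∈ SF, l s ≤ M) :
    {x ∈ convexHull ℝ (SF : Set E) | M ≤ l x} = convexHull ℝ {s : E | s ∈ SF ∧ l s = M} := by
  apply Set.Subset.antisymm
  · rintro x ⟨hx, hMx⟩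
    rw [Finset.convexHull_eq] at hx
    obtain ⟨w, hw0, hw1, hwx⟩ := hx
    have hlx : l x = ∑ y ∈ SF, w y * l y := by
      rw [← hwx, Finset.centerMass_eq_of_sum_1 _ _ hw1, map_sum]
      simp [LinearMap.map_smul, smul_eq_mul]
    have hsupp : ∀ y ∈ SF, w y ≠ 0 → l y = M := by
      intro y hy hwy
      by_contra hne
      have hlt : l y < M := lt_of_le_of_ne (hM y hy) hne
      have : ∑ z ∈ SF, w z * l z < ∑ z ∈ SF, w z * M := by
        apply Finset.sum_lt_sum
        · intro i hi
          exact mul_le_mul_of_nonneg_left (hM i hi) (hw0 i hi)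
        · exact ⟨y, hy, by
            have hpos : 0 < w y := lt_of_le_of_ne (hw0 y hy) (Ne.symm hwy)
            exact mul_lt_mul_of_pos_left hlt hpos⟩
      rw [← Finset.sum_mul, hw1, one_mul] at this
      rw [hlx] at hMx
      linarith
    have hxmem : x ∈ convexHull ℝ {s : E | s ∈ SF ∧ l s = M} := by
      rw [← hwx, ← Finset.centerMass_filter_ne_zero]
      apply Finset.centerMass_mem_convexHull
      · intro i hi; exact hw0 i (Finset.mem_filter.1 hi).1
      · rw [Finset.sum_filter_ne_zero, hw1]; exact one_pos
      · intro i hi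
        obtain ⟨hiS, hiw⟩ := Finset.mem_filter.1 hi
        exact ⟨hiS, hsupp i hiS hiw⟩
    exact hxmem
  · intro x hx
    have h1 : x ∈ convexHull ℝ (SF : Set E) :=
      convexHull_mono (fun s hs => hs.1) hx
    have h2 : l x = M := by
      have hc : Convex ℝ {z : E | l z = M} := by
        have := (convex_halfSpace_le (𝕜 := ℝ) ⟨l.map_add, l.map_smul⟩ M).inter
          (convex_halfSpace_ge (𝕜 := ℝ) ⟨l.map_add, l.map_smul⟩ M)
        convert this using 1
        ext z; simp [le_antisymm_iff, and_comm]
      exact convexHull_min (fun s hs => hs.2) hc hx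
    exact ⟨h1, h2.ge⟩

lemma exposed_set_eq (SF : Finset E) (l : E →ₗ[ℝ] ℝ) (M : ℝ) (hM : ∀ s ∈ SF, l s ≤ M)
    (s0 : E) (hs0 : s0 ∈ SF) (hs0M : l s0 = M) :
    {x ∈ convexHull ℝ (SF : Set E) | ∀ y ∈ convexHull ℝ (SF : Set E), l y ≤ l x}
      = convexHull ℝ {s : E | s ∈ SF ∧ l s = M} := by
  rw [← argmax_hull SF l M hM]
  ext x
  simp only [Set.mem_setOf_eq, and_congr_right_iff]
  intro hx
  constructor
  · intro h
    have := h s0 (subset_convexHull ℝ _ hs0)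
    rw [hs0M] at this; exact this
  · intro h y hy
    exact le_trans (hull_le SF l M hM y hy) h

lemma span_units {n : ℕ} {W : Submodule ℝ (Fin n → ℝ)}
    (h : ∀ i : Fin n, (Pi.single i 1 : Fin n → ℝ) ∈ W) : W = ⊤ := by
  rw [eq_top_iff]
  intro v _
  have hv : v = ∑ i : Fin n, v i • (Pi.single i 1 : Fin n → ℝ) := by
    conv_lhs => rw [pi_eq_sum_univ v]
    refine Finset.sum_congr rfl fun i _ => ?_
    congr 1
    ext j
    simp [Pi.single_apply, eq_comm]
  rw [hv]
  exact Submodule.sum_mem _ fun i _ => Submodule.smul_mem _ _ (h i)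

lemma vs_le_ker {n : ℕ} (T : Set (Fin n → ℝ)) (l : (Fin n → ℝ) →ₗ[ℝ] ℝ)
    (h : ∀ p ∈ T, ∀ q ∈ T, l p = l q) : vectorSpan ℝ T ≤ LinearMap.ker l := by
  rw [vectorSpan_def, Submodule.span_le]
  rintro v hv
  rw [Set.mem_vsub] at hv
  obtain ⟨p, hp, q, hq, rfl⟩ := hv
  simp only [SetLike.mem_coe, LinearMap.mem_ker, vsub_eq_sub, map_sub]
  rw [h p hp q hq, sub_self]

lemma finrank_vs_le_sub_two {n : ℕ} (T : Set (Fin n → ℝ))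
    (l1 l2 : (Fin n → ℝ) →ₗ[ℝ] ℝ)
    (h1 : ∀ p ∈ T, ∀ q ∈ T, l1 p = l1 q) (h2 : ∀ p ∈ T, ∀ q ∈ T, l2 p = l2 q)
    (u w : Fin n → ℝ) (hdet : l1 u * l2 w - l1 w * l2 u ≠ 0) :
    Module.finrank ℝ (vectorSpan ℝ T) ≤ n - 2 := by
  set φ : (Fin n → ℝ) →ₗ[ℝ] ℝ × ℝ := l1.prod l2 with hφ
  have hsurj : Function.Surjective φ := by
    intro z
    set D := l1 u * l2 w - l1 w * l2 u
    refine ⟨((z.1 * l2 w - z.2 * l1 w)/D) • u + ((z.2 * l1 u - z.1 * l2 u)/D) • w, ?_⟩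
    have : φ (((z.1 * l2 w - z.2 * l1 w)/D) • u + ((z.2 * l1 u - z.1 * l2 u)/D) • w)
        = (((z.1 * l2 w - z.2 * l1 w)/D) * l1 u + ((z.2 * l1 u - z.1 * l2 u)/D) * l1 w,
           ((z.1 * l2 w - z.2 * l1 w)/D) * l2 u + ((z.2 * l1 u - z.1 * l2 u)/D) * l2 w) := by
      simp [hφ, LinearMap.prod_apply, smul_eq_mul]
    rw [this]
    have hD : D ≠ 0 := hdet
    ext <;> simp only <;> field_simp <;> ring
  have hrange : LinearMap.range φ = ⊤ := LinearMap.range_eq_top.2 hsurj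
  have hrk := LinearMap.finrank_range_add_finrank_ker φ
  rw [hrange] at hrk
  have htop : Module.finrank ℝ (⊤ : Submodule ℝ (ℝ × ℝ)) = 2 := by
    rw [finrank_top]
    simp [Module.finrank_prod]
  rw [htop] at hrk
  have hdim : Module.finrank ℝ (Fin n → ℝ) = n := by
    simp [Module.finrank_fintype_fun_eq_card]
  rw [hdim] at hrk
  have hker : vectorSpan ℝ T ≤ LinearMap.ker φ := by
    rw [hφ, LinearMap.ker_prod]
    exact le_inf (vs_le_ker T l1 h1) (vs_le_ker T l2 h2)
  have := Submodule.finrank_mono hker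
  omega

lemma finrank_vs_le_sub_one {n : ℕ} (T : Set (Fin n → ℝ))
    (l : (Fin n → ℝ) →ₗ[ℝ] ℝ)
    (h : ∀ p ∈ T, ∀ q ∈ T, l p = l q)
    (u : Fin n → ℝ) (hu : l u ≠ 0) :
    Module.finrank ℝ (vectorSpan ℝ T) ≤ n - 1 := by
  have hsurj : Function.Surjective l := fun z => ⟨(z / l u) • u, by
    simp [smul_eq_mul]; field_simp⟩
  have hrange : LinearMap.range l = ⊤ := LinearMap.range_eq_top.2 hsurj
  have hrk := LinearMap.finrank_range_add_finrank_ker l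
  rw [hrange, finrank_top, Module.finrank_self] at hrk
  have hdim : Module.finrank ℝ (Fin n → ℝ) = n := by
    simp [Module.finrank_fintype_fun_eq_card]
  rw [hdim] at hrk
  have := Submodule.finrank_mono (vs_le_ker T l h)
  omega

lemma finrank_ge_of_proj {n : ℕ} (W : Submodule ℝ (Fin (n+1) → ℝ))
    (h : ∀ i : Fin n, ∃ v ∈ W, ∃ c : ℝ, c ≠ 0 ∧
      LinearMap.funLeft ℝ ℝ Fin.castSucc v = c • (Pi.single i 1 : Fin n → ℝ)) :
    n ≤ Module.finrank ℝ W := by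
  set π : (Fin (n+1) → ℝ) →ₗ[ℝ] (Fin n → ℝ) := LinearMap.funLeft ℝ ℝ Fin.castSucc
  set π' : W →ₗ[ℝ] (Fin n → ℝ) := π.comp W.subtype
  have hrange : LinearMap.range π' = ⊤ := by
    apply span_units
    intro i
    obtain ⟨v, hvW, c, hc, hcv⟩ := h i
    have : (Pi.single i 1 : Fin n → ℝ) = c⁻¹ • π' ⟨v, hvW⟩ := by
      simp only [π', LinearMap.comp_apply, Submodule.subtype_apply]
      rw [hcv, smul_smul, inv_mul_cancel₀ hc, one_smul]
    rw [this]
    exact Submodule.smul_mem _ _ (LinearMap.mem_range_self π' ⟨v, hvW⟩)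
  have h1 : Module.finrank ℝ (LinearMap.range π') ≤ Module.finrank ℝ W :=
    LinearMap.finrank_range_le π'
  rw [hrange, finrank_top] at h1
  have hdim : Module.finrank ℝ (Fin n → ℝ) = n := by
    simp [Module.finrank_fintype_fun_eq_card]
  omega

namespace VFA

variable (k : ℕ)

/-- Standard "unit vector" at natural index `m`. -/
def unitv (m : ℕ) : Fin (k+4) → ℝ := fun j => if (j : ℕ) = m then 1 else 0

/-- Vertices of the `k`-cube sitting at level `t = 0`. -/
def cubePt (σ : Fin k → Bool) : Fin (k+4) → ℝ :=
  fun j => if h : (j : ℕ) < k then (if σ ⟨j.1, h⟩ then 1 else 0) else 0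

/-- Vertices of the octahedron in coordinates `k, k+1, k+2`, at level `t = 1`
(coordinate `k+3`). -/
def octPt (j : Fin 3) (s : Bool) : Fin (k+4) → ℝ :=
  (if s then (1:ℝ) else -1) • unitv k (k + j.1) + unitv k (k+3)

lemma cubePt_decomp (σ : Fin k → Bool) :
    cubePt k σ = ∑ i : Fin k, (if σ i then (1:ℝ) else 0) • unitv k i.1 := by
  funext j
  rw [Finset.sum_apply]
  by_cases h : (j : ℕ) < k
  · rw [Finset.sum_eq_single (⟨j.1, h⟩ : Fin k)]
    · simp [cubePt, unitv, h]
    · intro i _ hne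
      have : (j : ℕ) ≠ i.1 := fun hh => hne (by apply Fin.ext; simp [← hh])
      simp [unitv, this]
    · simp
  · have : ∀ i : Fin k, ((if σ i then (1:ℝ) else 0) • unitv k i.1) j = 0 := by
      intro i
      have : (j : ℕ) ≠ i.1 := by omega
      simp [unitv, this]
    rw [Finset.sum_congr rfl fun i _ => this i]
    simp [cubePt, h]

lemma l_cube (l : (Fin (k+4) → ℝ) →ₗ[ℝ] ℝ) (σ : Fin k → Bool) :
    l (cubePt k σ) = ∑ i : Fin k, (if σ i then l (unitv k i.1) else 0) := by
  rw [cubePt_decomp, map_sum]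
  refine Finset.sum_congr rfl fun i _ => ?_
  rw [map_smul]
  by_cases h : σ i <;> simp [h]

lemma l_oct (l : (Fin (k+4) → ℝ) →ₗ[ℝ] ℝ) (j : Fin 3) (s : Bool) :
    l (octPt k j s) = (if s then (1:ℝ) else -1) * l (unitv k (k + j.1)) + l (unitv k (k+3)) := by
  rw [octPt, map_add, map_smul]
  simp [smul_eq_mul]

lemma cubePt_apply_lt (σ : Fin k → Bool) (j : Fin (k+4)) (h : (j:ℕ) < k) :
    cubePt k σ j = if σ ⟨j.1, h⟩ then 1 else 0 := by simp [cubePt, h]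

lemma cubePt_apply_ge (σ : Fin k → Bool) (j : Fin (k+4)) (h : ¬ (j:ℕ) < k) :
    cubePt k σ j = 0 := by simp [cubePt, h]

lemma octPt_apply (j : Fin 3) (s : Bool) (m : Fin (k+4)) :
    octPt k j s m = (if s then (1:ℝ) else -1) * (if (m:ℕ) = k + j.1 then 1 else 0)
      + (if (m:ℕ) = k+3 then 1 else 0) := by
  have hj3 : ¬ ((3:ℕ) = (j:ℕ)) := by have := j.2; omega
  by_cases hs : s <;> by_cases h1 : (m:ℕ) = k + j.1 <;> by_cases h2 : (m:ℕ) = k+3 <;>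
    simp [octPt, unitv, hs, h1, h2, hj3]

lemma cubePt_injective : Function.Injective (cubePt k) := by
  intro σ τ h
  funext i
  have hi : (i : ℕ) < k := i.2
  have := congrFun h ⟨i.1, by omega⟩
  rw [cubePt_apply_lt k σ _ (by simpa using hi), cubePt_apply_lt k τ _ (by simpa using hi)] at this
  simp only [Fin.eta] at this
  by_cases h1 : σ i <;> by_cases h2 : τ i <;> simp_all

lemma cubePt_ne_octPt (σ : Fin k → Bool) (j : Fin 3) (s : Bool) :
    cubePt k σ ≠ octPt k j s := by
  intro h
  have := congrFun h ⟨k+3, by omega⟩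
  rw [cubePt_apply_ge k σ _ (by simp)] at this
  rw [octPt_apply] at this
  have hj : (j : ℕ) < 3 := j.2
  have h1 : ¬ ((k+3 : ℕ) = k + j.1) := by omega
  simp only [h1, if_false, if_true, if_pos rfl] at this
  norm_num at this

lemma octPt_injective2 : Function.Injective (fun p : Fin 3 × Bool => octPt k p.1 p.2) := by
  rintro ⟨j1, s1⟩ ⟨j2, s2⟩ h
  simp only at h
  have hj1 : (j1 : ℕ) < 3 := j1.2
  have hj2 : (j2 : ℕ) < 3 := j2.2
  have hcoord := congrFun h ⟨k + j1.1, by omega⟩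
  rw [octPt_apply, octPt_apply] at hcoord
  simp only [if_pos rfl] at hcoord
  have hne3 : ¬ (k + j1.1 = k + 3) := by omega
  rw [if_neg hne3] at hcoord
  by_cases hjj : j1 = j2
  · subst hjj
    simp only [if_pos rfl] at hcoord
    by_cases hs1 : s1 <;> by_cases hs2 : s2 <;> simp_all <;> norm_num at hcoord
  · exfalso
    have : ¬ ((k + j1.1 : ℕ) = k + j2.1) := by
      intro hh
      exact hjj (by apply Fin.ext; omega)
    rw [if_neg this] at hcoord
    by_cases hs1 : s1 <;> simp [hs1] at hcoord

/-- The vertex set as a finset. -/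
noncomputable def SF : Finset (Fin (k+4) → ℝ) :=
  (Finset.univ.image (cubePt k)) ∪ (Finset.univ.image (fun p : Fin 3 × Bool => octPt k p.1 p.2))

lemma cubePt_mem_SF (σ : Fin k → Bool) : cubePt k σ ∈ SF k := by
  apply Finset.mem_union_left
  exact Finset.mem_image_of_mem _ (Finset.mem_univ _)

lemma octPt_mem_SF (j : Fin 3) (s : Bool) : octPt k j s ∈ SF k := by
  apply Finset.mem_union_right
  exact Finset.mem_image_of_mem (fun p : Fin 3 × Bool => octPt k p.1 p.2) (Finset.mem_univ (j, s))

lemma mem_SF_iff (x : Fin (k+4) → ℝ) :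
    x ∈ SF k ↔ (∃ σ, x = cubePt k σ) ∨ (∃ j s, x = octPt k j s) := by
  simp only [SF, Finset.mem_union, Finset.mem_image, Finset.mem_univ, true_and]
  constructor
  · rintro (⟨σ, rfl⟩ | ⟨⟨j, s⟩, rfl⟩)
    · exact Or.inl ⟨σ, rfl⟩
    · exact Or.inr ⟨j, s, rfl⟩
  · rintro (⟨σ, rfl⟩ | ⟨j, s, rfl⟩)
    · exact Or.inl ⟨σ, rfl⟩
    · exact Or.inr ⟨⟨j, s⟩, rfl⟩

lemma cubePt_false_eq_zero : cubePt k (fun _ => false) = 0 := by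
  funext j; by_cases h : (j:ℕ) < k <;> simp [cubePt, h]


/-- The linear functional given by a coefficient vector. -/
noncomputable def lfun (c : Fin (k+4) → ℝ) : (Fin (k+4) → ℝ) →ₗ[ℝ] ℝ :=
  ∑ i, c i • LinearMap.proj i

lemma lfun_apply (c x : Fin (k+4) → ℝ) : lfun k c x = ∑ i, c i * x i := by
  simp [lfun, LinearMap.sum_apply, LinearMap.smul_apply, smul_eq_mul]

lemma lfun_unitv (c : Fin (k+4) → ℝ) (m : ℕ) (h : m < k+4) :
    lfun k c (unitv k m) = c ⟨m, h⟩ := by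
  rw [lfun_apply]
  rw [Finset.sum_eq_single (⟨m, h⟩ : Fin (k+4))]
  · simp [unitv]
  · intro i _ hne
    have : (i : ℕ) ≠ m := fun hh => hne (Fin.ext hh)
    simp [unitv, this]
  · simp



lemma proj_unitv (m m' : ℕ) (h : m' < k+4) :
    LinearMap.proj (R := ℝ) (φ := fun _ : Fin (k+4) => ℝ) (⟨m', h⟩ : Fin (k+4)) (unitv k m)
      = if m' = m then 1 else 0 := rfl

/-! ### The octahedron-facet functionals -/

def octCoef (s : Fin 3 → Bool) : Fin (k+4) → ℝ := fun i =>
  if (i:ℕ) = k+3 then -1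
  else if h : k ≤ (i:ℕ) ∧ (i:ℕ) < k+3 then (if s ⟨i.1 - k, by omega⟩ then 1 else -1)
  else 0

noncomputable def octL (s : Fin 3 → Bool) : (Fin (k+4) → ℝ) →ₗ[ℝ] ℝ :=
  lfun k (octCoef k s)

lemma octL_unit_cube (s : Fin 3 → Bool) (i : Fin k) :
    octL k s (unitv k i.1) = 0 := by
  rw [octL, lfun_unitv k _ i.1 (by omega)]
  have h1 : ¬ ((i:ℕ) = k+3) := by omega
  have h2 : ¬ (k ≤ (i:ℕ) ∧ (i:ℕ) < k+3) := by omega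
  simp [octCoef, h1, h2]

lemma octL_unit_oct (s : Fin 3 → Bool) (j : Fin 3) :
    octL k s (unitv k (k + j.1)) = (if s j then 1 else -1) := by
  have hj : (j:ℕ) < 3 := j.2
  rw [octL, lfun_unitv k _ (k + j.1) (by omega)]
  have h1 : ¬ ((k + j.1 : ℕ) = k+3) := by omega
  have h2 : k ≤ (k + j.1:ℕ) ∧ (k + j.1:ℕ) < k+3 := by omega
  simp only [octCoef, h1, if_false]
  rw [dif_pos h2]
  have h4 : k + (j:ℕ) - k = (j:ℕ) := by omega
  simp only [h4, Fin.eta]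

lemma octL_unit_t (s : Fin 3 → Bool) :
    octL k s (unitv k (k + 3)) = -1 := by
  rw [octL, lfun_unitv k _ (k + 3) (by omega)]
  simp [octCoef]

lemma octL_cube (s : Fin 3 → Bool) (σ : Fin k → Bool) :
    octL k s (cubePt k σ) = 0 := by
  rw [l_cube]
  apply Finset.sum_eq_zero
  intro i _
  rw [octL_unit_cube]
  simp

lemma octL_oct (s : Fin 3 → Bool) (j : Fin 3) (b : Bool) :
    octL k s (octPt k j b) = (if b then (1:ℝ) else -1) * (if s j then 1 else -1) - 1 := by
  rw [l_oct, octL_unit_oct, octL_unit_t]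
  ring

lemma octL_le (s : Fin 3 → Bool) : ∀ x ∈ SF k, octL k s x ≤ 0 := by
  intro x hx
  rcases (mem_SF_iff k x).1 hx with ⟨σ, rfl⟩ | ⟨j, b, rfl⟩
  · rw [octL_cube]
  · rw [octL_oct]
    by_cases hb : b <;> by_cases hsj : s j <;> simp [hb, hsj] <;> norm_num

lemma octL_eq_zero_iff (s : Fin 3 → Bool) (j : Fin 3) (b : Bool) :
    octL k s (octPt k j b) = 0 ↔ b = s j := by
  rw [octL_oct]
  by_cases hb : b <;> by_cases hsj : s j <;> simp [hb, hsj] <;> norm_num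

/-- The vertex set of the `s`-facet: all cube points together with the
octahedron facet selected by the sign vector `s`. -/
def Tset (s : Fin 3 → Bool) : Set (Fin (k+4) → ℝ) :=
  Set.range (cubePt k) ∪ {x | ∃ j, x = octPt k j (s j)}

lemma argmax_octL (s : Fin 3 → Bool) :
    {x : Fin (k+4) → ℝ | x ∈ SF k ∧ octL k s x = 0} = Tset k s := by
  ext x
  constructor
  · rintro ⟨hx, hx0⟩
    rcases (mem_SF_iff k x).1 hx with ⟨σ, rfl⟩ | ⟨j, b, rfl⟩
    · exact Or.inl ⟨σ, rfl⟩
    · right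
      have hb : b = s j := (octL_eq_zero_iff k s j b).1 hx0
      exact ⟨j, by rw [hb]⟩
  · rintro (⟨σ, rfl⟩ | ⟨j, rfl⟩)
    · exact ⟨cubePt_mem_SF k σ, octL_cube k s σ⟩
    · exact ⟨octPt_mem_SF k j (s j), (octL_eq_zero_iff k s j (s j)).2 rfl⟩

/-! ### The cube-vertex functionals -/

def cubeCoef (σ : Fin k → Bool) : Fin (k+4) → ℝ := fun i =>
  if h : (i:ℕ) < k then (if σ ⟨i.1, h⟩ then 1 else -1)
  else if (i:ℕ) = k+3 then -((k:ℝ)+1) else 0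

noncomputable def cubeL (σ : Fin k → Bool) : (Fin (k+4) → ℝ) →ₗ[ℝ] ℝ :=
  lfun k (cubeCoef k σ)

lemma cubeL_unit_cube (σ : Fin k → Bool) (i : Fin k) :
    cubeL k σ (unitv k i.1) = if σ i then 1 else -1 := by
  have hi : (i:ℕ) < k := i.2
  rw [cubeL, lfun_unitv k _ i.1 (by omega)]
  simp [cubeCoef, hi, Fin.eta]

lemma cubeL_unit_oct (σ : Fin k → Bool) (j : Fin 3) :
    cubeL k σ (unitv k (k + j.1)) = 0 := by
  have hj : (j:ℕ) < 3 := j.2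
  rw [cubeL, lfun_unitv k _ (k + j.1) (by omega)]
  have h1 : ¬ ((k + j.1 : ℕ) < k) := by omega
  have h2 : ¬ ((k + j.1 : ℕ) = k+3) := by omega
  simp [cubeCoef, h1, h2]
  intro h3; exfalso; omega

lemma cubeL_unit_t (σ : Fin k → Bool) :
    cubeL k σ (unitv k (k+3)) = -((k:ℝ)+1) := by
  rw [cubeL, lfun_unitv k _ (k+3) (by omega)]
  have h1 : ¬ ((k + 3 : ℕ) < k) := by omega
  simp [cubeCoef, h1]

noncomputable def cubeM (σ : Fin k → Bool) : ℝ := ∑ i : Fin k, (if σ i then (1:ℝ) else 0)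

lemma cubeM_nonneg (σ : Fin k → Bool) : 0 ≤ cubeM k σ :=
  Finset.sum_nonneg fun i _ => by by_cases h : σ i <;> simp [h]

lemma cubeL_cube (σ τ : Fin k → Bool) :
    cubeL k σ (cubePt k τ) = ∑ i : Fin k, (if τ i then (if σ i then (1:ℝ) else -1) else 0) := by
  rw [l_cube]
  exact Finset.sum_congr rfl fun i _ => by rw [cubeL_unit_cube]

lemma cubeL_term_le (σ τ : Fin k → Bool) (i : Fin k) :
    (if τ i then (if σ i then (1:ℝ) else -1) else 0) ≤ (if σ i then (1:ℝ) else 0) := by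
  by_cases h1 : σ i <;> by_cases h2 : τ i <;> simp [h1, h2] <;> norm_num

lemma cubeL_cube_le (σ τ : Fin k → Bool) : cubeL k σ (cubePt k τ) ≤ cubeM k σ := by
  rw [cubeL_cube, cubeM]
  exact Finset.sum_le_sum fun i _ => cubeL_term_le k σ τ i

lemma cubeL_self (σ : Fin k → Bool) : cubeL k σ (cubePt k σ) = cubeM k σ := by
  rw [cubeL_cube, cubeM]
  refine Finset.sum_congr rfl fun i _ => ?_
  by_cases h : σ i <;> simp [h]

lemma cubeL_cube_lt (σ τ : Fin k → Bool) (hne : τ ≠ σ) :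
    cubeL k σ (cubePt k τ) < cubeM k σ := by
  rw [cubeL_cube, cubeM]
  obtain ⟨i0, hi0⟩ : ∃ i0, τ i0 ≠ σ i0 := by
    by_contra h
    push_neg at h
    exact hne (funext h)
  apply Finset.sum_lt_sum (fun i _ => cubeL_term_le k σ τ i)
  refine ⟨i0, Finset.mem_univ _, ?_⟩
  by_cases h1 : σ i0 <;> by_cases h2 : τ i0 <;> simp_all <;> norm_num

lemma cubeL_oct (σ : Fin k → Bool) (j : Fin 3) (b : Bool) :
    cubeL k σ (octPt k j b) = -((k:ℝ)+1) := by
  rw [l_oct, cubeL_unit_oct, cubeL_unit_t]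
  ring

lemma cubeL_le (σ : Fin k → Bool) : ∀ x ∈ SF k, cubeL k σ x ≤ cubeM k σ := by
  intro x hx
  rcases (mem_SF_iff k x).1 hx with ⟨τ, rfl⟩ | ⟨j, b, rfl⟩
  · exact cubeL_cube_le k σ τ
  · rw [cubeL_oct]
    have := cubeM_nonneg k σ
    have hk0 : (0:ℝ) ≤ (k:ℝ) := Nat.cast_nonneg k
    linarith

lemma argmax_cubeL (σ : Fin k → Bool) :
    {x : Fin (k+4) → ℝ | x ∈ SF k ∧ cubeL k σ x = cubeM k σ} = {cubePt k σ} := by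
  ext x
  simp only [Set.mem_setOf_eq, Set.mem_singleton_iff]
  constructor
  · rintro ⟨hx, hx0⟩
    rcases (mem_SF_iff k x).1 hx with ⟨τ, rfl⟩ | ⟨j, b, rfl⟩
    · by_contra hne
      have : τ ≠ σ := fun h => hne (by rw [h])
      exact absurd hx0 (ne_of_lt (cubeL_cube_lt k σ τ this))
    · exfalso
      rw [cubeL_oct] at hx0
      have := cubeM_nonneg k σ
      have hk0 : (0:ℝ) ≤ (k:ℝ) := Nat.cast_nonneg k
      linarith
  · rintro rfl
    exact ⟨cubePt_mem_SF k σ, cubeL_self k σ⟩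

/-! ### The polytope -/

noncomputable def P : Set (Fin (k+4) → ℝ) := convexHull ℝ ↑(SF k)

lemma cube_extremePoint (σ : Fin k → Bool) : cubePt k σ ∈ (P k).extremePoints ℝ := by
  have heq := exposed_set_eq (SF k) (cubeL k σ) (cubeM k σ) (cubeL_le k σ)
    (cubePt k σ) (cubePt_mem_SF k σ) (cubeL_self k σ)
  rw [argmax_cubeL, convexHull_singleton] at heq
  have hexp : IsExposed ℝ (P k) {cubePt k σ} := by
    intro _
    refine ⟨(cubeL k σ).toContinuousLinearMap, ?_⟩
    rw [← heq]
    simp only [LinearMap.coe_toContinuousLinearMap', P]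
  exact hexp.isExtreme.mem_extremePoints

/-! ### The eight octahedral facets -/

lemma Tset_subset_SF (s : Fin 3 → Bool) : Tset k s ⊆ ↑(SF k) := by
  rintro x (⟨σ, rfl⟩ | ⟨j, rfl⟩)
  · exact cubePt_mem_SF k σ
  · exact octPt_mem_SF k j (s j)

lemma Fo_exposed_eq (s : Fin 3 → Bool) :
    {x ∈ P k | ∀ y ∈ P k, octL k s y ≤ octL k s x} = convexHull ℝ (Tset k s) := by
  have := exposed_set_eq (SF k) (octL k s) 0 (octL_le k s)
    (cubePt k (fun _ => false)) (cubePt_mem_SF k _) (octL_cube k s _)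
  rw [argmax_octL] at this
  exact this

lemma Fo_subset_hyperplane (s : Fin 3 → Bool) :
    convexHull ℝ (Tset k s) ⊆ {x | octL k s x = 0} := by
  apply convexHull_min
  · rintro x (⟨σ, rfl⟩ | ⟨j, rfl⟩)
    · exact octL_cube k s σ
    · exact (octL_eq_zero_iff k s j (s j)).2 rfl
  · exact convex_hyperplane ⟨(octL k s).map_add, (octL k s).map_smul⟩ 0

lemma octPt_flip_not_mem_Fo (s : Fin 3 → Bool) (j : Fin 3) :
    octPt k j (!(s j)) ∉ convexHull ℝ (Tset k s) := by
  intro h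
  have h0 := Fo_subset_hyperplane k s h
  have : (!(s j)) = s j := (octL_eq_zero_iff k s j _).1 h0
  simp at this

lemma Fo_ne_P (s : Fin 3 → Bool) : convexHull ℝ (Tset k s) ≠ P k := by
  intro h
  apply octPt_flip_not_mem_Fo k s 0
  rw [h]
  exact subset_convexHull ℝ _ (octPt_mem_SF k 0 _)

lemma Fo_nonempty (s : Fin 3 → Bool) : (convexHull ℝ (Tset k s)).Nonempty :=
  ⟨cubePt k (fun _ => false), subset_convexHull ℝ _ (Or.inl ⟨_, rfl⟩)⟩

lemma Fo_isExposed (s : Fin 3 → Bool) : IsExposed ℝ (P k) (convexHull ℝ (Tset k s)) := by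
  intro _
  refine ⟨(octL k s).toContinuousLinearMap, ?_⟩
  rw [← Fo_exposed_eq]
  simp only [LinearMap.coe_toContinuousLinearMap']

lemma finrank_Tset_le (s : Fin 3 → Bool) :
    Module.finrank ℝ (vectorSpan ℝ (Tset k s)) ≤ k+3 := by
  have h := finrank_vs_le_sub_one (Tset k s) (octL k s) ?_ (unitv k (k+3)) ?_
  · omega
  · intro p hp q hq
    have hp0 : octL k s p = 0 := Fo_subset_hyperplane k s (subset_convexHull ℝ _ hp)
    have hq0 : octL k s q = 0 := Fo_subset_hyperplane k s (subset_convexHull ℝ _ hq)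
    rw [hp0, hq0]
  · rw [octL_unit_t]; norm_num

lemma cubePt_indicator (m : ℕ) (hik : m < k) :
    cubePt k (fun m' => decide (m'.1 = m)) = unitv k m := by
  funext j
  by_cases h : (j:ℕ) < k
  · rw [cubePt_apply_lt k _ j h]
    simp only [unitv]
    by_cases he : (j:ℕ) = m <;> simp [he]
  · rw [cubePt_apply_ge k _ j h]
    have : ¬ ((j:ℕ) = m) := by omega
    simp [unitv, this]

lemma finrank_Tset_ge (s : Fin 3 → Bool) :
    k+3 ≤ Module.finrank ℝ (vectorSpan ℝ (Tset k s)) := by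
  apply finrank_ge_of_proj (n := k+3) (vectorSpan ℝ (Tset k s))
  intro i
  by_cases hik : (i:ℕ) < k
  · refine ⟨unitv k i.1, ?_, 1, one_ne_zero, ?_⟩
    · have hmem : cubePt k (fun m => decide (m.1 = i.1)) -ᵥ cubePt k (fun _ => false)
          ∈ vectorSpan ℝ (Tset k s) :=
        vsub_mem_vectorSpan ℝ (Or.inl ⟨_, rfl⟩) (Or.inl ⟨_, rfl⟩)
      rwa [cubePt_indicator k i.1 hik, cubePt_false_eq_zero, vsub_eq_sub, sub_zero] at hmem
    · funext j
      simp only [LinearMap.funLeft_apply, one_smul, unitv]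
      rw [Pi.single_apply]
      simp [Fin.ext_iff, Fin.coe_castSucc]
  · set j3 : Fin 3 := ⟨i.1 - k, by omega⟩
    refine ⟨octPt k j3 (s j3), ?_, (if s j3 then (1:ℝ) else -1), ?_, ?_⟩
    · have hmem : octPt k j3 (s j3) -ᵥ cubePt k (fun _ => false)
          ∈ vectorSpan ℝ (Tset k s) :=
        vsub_mem_vectorSpan ℝ (Or.inr ⟨j3, rfl⟩) (Or.inl ⟨_, rfl⟩)
      rwa [cubePt_false_eq_zero, vsub_eq_sub, sub_zero] at hmem
    · by_cases h : s j3 <;> simp [h]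
    · funext j
      simp only [LinearMap.funLeft_apply]
      rw [octPt_apply]
      have hj : (j:ℕ) < k+3 := j.2
      have h2 : ¬ ((Fin.castSucc j : Fin (k+4)) : ℕ) = k+3 := by
        simp [Fin.coe_castSucc]; omega
      have h3 : k + (j3:ℕ) = i.1 := by simp only [j3]; omega
      rw [if_neg h2]
      simp only [Pi.smul_apply, smul_eq_mul]
      rw [Pi.single_apply]
      by_cases he : (j:ℕ) = (i:ℕ)
      · have : ((Fin.castSucc j : Fin (k+4)) : ℕ) = k + (j3:ℕ) := by
          simp [Fin.coe_castSucc]; omega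
        rw [if_pos this, if_pos (Fin.ext he)]
        ring
      · have : ¬ ((Fin.castSucc j : Fin (k+4)) : ℕ) = k + (j3:ℕ) := by
          simp [Fin.coe_castSucc]; omega
        rw [if_neg this]
        have h4 : ¬ (j = i) := fun hh => he (congrArg Fin.val hh)
        rw [if_neg h4]
        ring

lemma polyDim_Fo (s : Fin 3 → Bool) : polyDim (convexHull ℝ (Tset k s)) = k+3 := by
  rw [polyDim, affineSpan_convexHull, direction_affineSpan]
  exact le_antisymm (finrank_Tset_le k s) (finrank_Tset_ge k s)

lemma Fo_mem_facets (s : Fin 3 → Bool) :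
    convexHull ℝ (Tset k s) ∈ ambientFacets (P k) := by
  refine ⟨⟨Fo_isExposed k s, Fo_nonempty k s, Fo_ne_P k s⟩, ?_⟩
  rw [polyDim_Fo]
  have : Module.finrank ℝ (Fin (k+4) → ℝ) = k+4 := by
    simp [Module.finrank_fintype_fun_eq_card]
  omega

lemma Fo_injective : Function.Injective (fun s : Fin 3 → Bool => convexHull ℝ (Tset k s)) := by
  intro s1 s2 h
  have h' : convexHull ℝ (Tset k s1) = convexHull ℝ (Tset k s2) := h
  funext j
  have h1 : octPt k j (s1 j) ∈ convexHull ℝ (Tset k s2) := by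
    rw [← h']
    exact subset_convexHull ℝ _ (Or.inr ⟨j, rfl⟩)
  have := (octL_eq_zero_iff k s2 j (s1 j)).1 (Fo_subset_hyperplane k s2 h1)
  exact this

lemma cube_subset_Fo (s : Fin 3 → Bool) (σ : Fin k → Bool) :
    cubePt k σ ∈ convexHull ℝ (Tset k s) :=
  subset_convexHull ℝ _ (Or.inl ⟨σ, rfl⟩)

/-! ### Global properties of `P` -/

lemma unitv_single (i : Fin (k+4)) : unitv k i.1 = Pi.single i 1 := by
  funext j
  rw [Pi.single_apply]
  simp [unitv, Fin.ext_iff]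

lemma octPt_diff (j : Fin 3) :
    octPt k j true - octPt k j false = (2:ℝ) • unitv k (k + j.1) := by
  simp only [octPt, if_true, Bool.false_eq_true, if_false]
  module

lemma unitv_cube_mem_vs (m : ℕ) (hm : m < k) :
    unitv k m ∈ vectorSpan ℝ (↑(SF k) : Set (Fin (k+4) → ℝ)) := by
  have hmem : cubePt k (fun m' => decide (m'.1 = m)) -ᵥ cubePt k (fun _ => false)
      ∈ vectorSpan ℝ (↑(SF k) : Set (Fin (k+4) → ℝ)) :=
    vsub_mem_vectorSpan ℝ (cubePt_mem_SF k _) (cubePt_mem_SF k _)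
  rwa [cubePt_indicator k m hm, cubePt_false_eq_zero, vsub_eq_sub, sub_zero] at hmem

lemma unitv_oct_mem_vs (j : Fin 3) :
    unitv k (k + j.1) ∈ vectorSpan ℝ (↑(SF k) : Set (Fin (k+4) → ℝ)) := by
  have hmem : octPt k j true -ᵥ octPt k j false
      ∈ vectorSpan ℝ (↑(SF k) : Set (Fin (k+4) → ℝ)) :=
    vsub_mem_vectorSpan ℝ (octPt_mem_SF k j true) (octPt_mem_SF k j false)
  rw [vsub_eq_sub, octPt_diff] at hmem
  have := Submodule.smul_mem _ ((2:ℝ)⁻¹) hmem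
  rwa [smul_smul, inv_mul_cancel₀ (by norm_num), one_smul] at this

lemma unitv_t_mem_vs :
    unitv k (k + 3) ∈ vectorSpan ℝ (↑(SF k) : Set (Fin (k+4) → ℝ)) := by
  have hmem : octPt k 0 true -ᵥ cubePt k (fun _ => false)
      ∈ vectorSpan ℝ (↑(SF k) : Set (Fin (k+4) → ℝ)) :=
    vsub_mem_vectorSpan ℝ (octPt_mem_SF k 0 true) (cubePt_mem_SF k _)
  rw [cubePt_false_eq_zero, vsub_eq_sub, sub_zero, octPt] at hmem
  simp only [if_pos] at hmem
  have h0 : unitv k (k + (0 : Fin 3).1) ∈ vectorSpan ℝ (↑(SF k) : Set (Fin (k+4) → ℝ)) :=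
    unitv_oct_mem_vs k 0
  have := Submodule.sub_mem _ hmem h0
  have h1 : (1:ℝ) • unitv k (k + (0 : Fin 3).1) + unitv k (k+3)
      - unitv k (k + (0 : Fin 3).1) = unitv k (k+3) := by module
  rwa [h1] at this

lemma vs_SF_top : vectorSpan ℝ (↑(SF k) : Set (Fin (k+4) → ℝ)) = ⊤ := by
  apply span_units
  intro i
  rw [← unitv_single]
  rcases lt_or_ge (i:ℕ) k with h | h
  · exact unitv_cube_mem_vs k i.1 h
  · rcases lt_or_ge (i:ℕ) (k+3) with h2 | h2
    · have : i.1 = k + ((⟨i.1 - k, by omega⟩ : Fin 3) : ℕ) := by simp; omega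
      rw [this]
      exact unitv_oct_mem_vs k _
    · have : i.1 = k + 3 := by have := i.2; omega
      rw [this]
      exact unitv_t_mem_vs k

lemma affineSpan_P_top : affineSpan ℝ (P k) = ⊤ := by
  rw [P, affineSpan_convexHull]
  rw [eq_top_iff]
  intro x _
  have h0 : cubePt k (fun _ => false) ∈ affineSpan ℝ (↑(SF k) : Set (Fin (k+4) → ℝ)) :=
    subset_affineSpan ℝ _ (cubePt_mem_SF k _)
  have hd : x - cubePt k (fun _ => false) ∈ (affineSpan ℝ (↑(SF k) : Set (Fin (k+4) → ℝ))).direction := by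
    rw [direction_affineSpan, vs_SF_top]
    trivial
  have := AffineSubspace.vadd_mem_of_mem_direction hd h0
  simpa using this

lemma isPolytope_P : IsPolytope (P k) := ⟨↑(SF k), (SF k).finite_toSet, rfl⟩

lemma extremePoints_subset_SF : (P k).extremePoints ℝ ⊆ ↑(SF k) :=
  extremePoints_convexHull_subset

/-! ### Helpers for the facet classification -/

lemma l_cube_update (l : (Fin (k+4) → ℝ) →ₗ[ℝ] ℝ) (σ : Fin k → Bool) (i : Fin k) (v : Bool) :
    l (cubePt k (Function.update σ i v)) = l (cubePt k σ)
      + ((if v then l (unitv k i.1) else 0) - (if σ i then l (unitv k i.1) else 0)) := by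
  rw [l_cube, l_cube]
  have hfun : (fun i' : Fin k => if Function.update σ i v i' then l (unitv k i'.1) else 0)
      = Function.update (fun i' : Fin k => if σ i' then l (unitv k i'.1) else 0) i
        (if v then l (unitv k i.1) else 0) := by
    funext i'
    by_cases h : i' = i
    · subst h; simp [Function.update_self]
    · simp [Function.update_of_ne h]
  rw [hfun, Finset.sum_update_of_mem (Finset.mem_univ i),
    ← Finset.add_sum_erase _ _ (Finset.mem_univ i), Finset.sdiff_singleton_eq_erase]
  ring

lemma forced_coord (l : (Fin (k+4) → ℝ) →ₗ[ℝ] ℝ) (M : ℝ)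
    (hmax : ∀ x ∈ SF k, l x ≤ M) (σ : Fin k → Bool) (hσ : l (cubePt k σ) = M)
    (i : Fin k) (hai : l (unitv k i.1) ≠ 0) : σ i = decide (0 < l (unitv k i.1)) := by
  set a := l (unitv k i.1) with ha
  by_contra hne
  have hupd := l_cube_update k l σ i (decide (0 < a))
  have hle := hmax _ (cubePt_mem_SF k (Function.update σ i (decide (0 < a))))
  rw [hupd, hσ] at hle
  rcases lt_trichotomy a 0 with hlt | heq | hgt
  · have hd : decide (0 < a) = false := by simp [not_lt.2 (le_of_lt hlt)]
    have hσi : σ i = true := by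
      by_contra hσi'
      have h' : σ i = false := by simpa using hσi'
      rw [h', hd] at hne
      exact hne rfl
    rw [hd, hσi] at hle
    simp only [if_false, if_true, Bool.false_eq_true] at hle
    linarith
  · exact hai heq
  · have hd : decide (0 < a) = true := by simp [hgt]
    have hσi : σ i = false := by
      by_contra hσi'
      have h' : σ i = true := by simpa using hσi'
      rw [h', hd] at hne
      exact hne rfl
    rw [hd, hσi] at hle
    simp only [if_true, Bool.false_eq_true, if_false] at hle
    linarith

lemma l_cube_single (l : (Fin (k+4) → ℝ) →ₗ[ℝ] ℝ) (i0 : Fin k)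
    (hzero : ∀ i : Fin k, i ≠ i0 → l (unitv k i.1) = 0) (σ : Fin k → Bool) :
    l (cubePt k σ) = if σ i0 then l (unitv k i0.1) else 0 := by
  rw [l_cube]
  rw [Finset.sum_eq_single i0]
  · intro i _ hne
    rw [hzero i hne]
    simp
  · simp

/-- Vertex set of a cube-type facet. -/
def Uset (i0 : Fin k) (ε : Bool) : Set (Fin (k+4) → ℝ) :=
  {x | ∃ σ, σ i0 = ε ∧ x = cubePt k σ} ∪ {x | ∃ j s, x = octPt k j s}

lemma vs_le_of_oct_only (hk : 3 ≤ k) (T : Set (Fin (k+4) → ℝ))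
    (hT : ∀ p ∈ T, ∃ j s, p = octPt k j s) :
    Module.finrank ℝ (vectorSpan ℝ T) ≤ k+2 := by
  have h0 : (0:ℕ) < k+4 := by omega
  have h1 : (1:ℕ) < k+4 := by omega
  have hvan : ∀ (m : Fin (k+4)), (m:ℕ) < k → ∀ p ∈ T, LinearMap.proj (R := ℝ)
      (φ := fun _ : Fin (k+4) => ℝ) m p = 0 := by
    intro m hm p hp
    obtain ⟨j, s, rfl⟩ := hT p hp
    have hj : (j:ℕ) < 3 := j.2
    rw [LinearMap.proj_apply, octPt_apply]
    have e1 : ¬ ((m:ℕ) = k + j.1) := by omega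
    have e2 : ¬ ((m:ℕ) = k + 3) := by omega
    rw [if_neg e1, if_neg e2]
    ring
  have := finrank_vs_le_sub_two T
    (LinearMap.proj (⟨0, h0⟩ : Fin (k+4))) (LinearMap.proj (⟨1, h1⟩ : Fin (k+4)))
    (fun p hp q hq => by rw [hvan _ (by simp; omega) p hp, hvan _ (by simp; omega) q hq])
    (fun p hp q hq => by
      rw [hvan ⟨1, h1⟩ (by simp; omega) p hp, hvan ⟨1, h1⟩ (by simp; omega) q hq])
    (unitv k 0) (unitv k 1) ?_
  · omega
  · simp only [LinearMap.proj_apply, unitv]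
    norm_num

lemma vs_le_of_cube_only (T : Set (Fin (k+4) → ℝ))
    (hT : ∀ p ∈ T, ∃ σ, p = cubePt k σ) :
    Module.finrank ℝ (vectorSpan ℝ T) ≤ k+2 := by
  have h0 : k+3 < k+4 := by omega
  have h1 : k < k+4 := by omega
  have hvan : ∀ (m : Fin (k+4)), k ≤ (m:ℕ) → ∀ p ∈ T, LinearMap.proj (R := ℝ)
      (φ := fun _ : Fin (k+4) => ℝ) m p = 0 := by
    intro m hm p hp
    obtain ⟨σ, rfl⟩ := hT p hp
    rw [LinearMap.proj_apply, cubePt_apply_ge k σ m (by omega)]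
  have := finrank_vs_le_sub_two T
    (LinearMap.proj (⟨k+3, h0⟩ : Fin (k+4))) (LinearMap.proj (⟨k, h1⟩ : Fin (k+4)))
    (fun p hp q hq => by rw [hvan _ (by simp) p hp, hvan _ (by simp) q hq])
    (fun p hp q hq => by rw [hvan ⟨k, h1⟩ (by simp) p hp, hvan ⟨k, h1⟩ (by simp) q hq])
    (unitv k (k+3)) (unitv k k) ?_
  · omega
  · simp only [LinearMap.proj_apply, unitv]
    norm_num

lemma facet_classification (hk : 3 ≤ k) (F : Set (Fin (k+4) → ℝ))
    (hF : F ∈ ambientFacets (P k)) :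
    (∀ σ, cubePt k σ ∈ F) ∨ (∃ i0 : Fin k, ∃ ε : Bool, F = convexHull ℝ (Uset k i0 ε)) := by
  obtain ⟨⟨hexp, hne, hnePk⟩, hdim⟩ := hF
  obtain ⟨L, hL⟩ := hexp hne
  set l : (Fin (k+4) → ℝ) →ₗ[ℝ] ℝ := (L : (Fin (k+4) → ℝ) →ₗ[ℝ] ℝ) with hldef
  have hlL : ∀ x, l x = L x := fun x => rfl
  obtain ⟨s0, hs0SF, hs0max⟩ := Finset.exists_max_image (SF k) (fun x => l x)
    ⟨cubePt k (fun _ => false), cubePt_mem_SF k _⟩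
  set M : ℝ := l s0 with hMdef
  have hmax : ∀ x ∈ SF k, l x ≤ M := hs0max
  have hPle : ∀ y ∈ P k, l y ≤ M := by
    rw [P]; exact hull_le (SF k) l M hmax
  have hFeq : F = {x ∈ P k | M ≤ l x} := by
    rw [hL]
    ext x
    simp only [Set.mem_setOf_eq]
    constructor
    · rintro ⟨hx, hxmax⟩
      exact ⟨hx, hxmax s0 (by rw [P]; exact subset_convexHull ℝ _ hs0SF)⟩
    · rintro ⟨hx, hMx⟩
      exact ⟨hx, fun y hy => le_trans (hPle y hy) hMx⟩
  have hFT : F = convexHull ℝ {x : Fin (k+4) → ℝ | x ∈ SF k ∧ l x = M} := by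
    rw [hFeq, P]
    exact argmax_hull (SF k) l M hmax
  set T := {x : Fin (k+4) → ℝ | x ∈ SF k ∧ l x = M} with hTdef
  have hdim' : Module.finrank ℝ (vectorSpan ℝ T) = k+3 := by
    have h1 : polyDim F = Module.finrank ℝ (vectorSpan ℝ T) := by
      rw [hFT, polyDim, affineSpan_convexHull, direction_affineSpan]
    have h2 : Module.finrank ℝ (Fin (k+4) → ℝ) = k+4 := by
      simp [Module.finrank_fintype_fun_eq_card]
    rw [h1, h2] at hdim
    omega
  -- T contains a cube point
  have hTC : ∃ σ, cubePt k σ ∈ T := by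
    by_contra hno
    push_neg at hno
    have : ∀ p ∈ T, ∃ j s, p = octPt k j s := by
      intro p hp
      rcases (mem_SF_iff k p).1 hp.1 with ⟨σ, rfl⟩ | ⟨j, s, rfl⟩
      · exact absurd hp (hno σ)
      · exact ⟨j, s, rfl⟩
    have := vs_le_of_oct_only k hk T this
    omega
  -- T contains an octahedron point
  have hTO : ∃ j s, octPt k j s ∈ T := by
    by_contra hno
    push_neg at hno
    have : ∀ p ∈ T, ∃ σ, p = cubePt k σ := by
      intro p hp
      rcases (mem_SF_iff k p).1 hp.1 with ⟨σ, rfl⟩ | ⟨j, s, rfl⟩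
      · exact ⟨σ, rfl⟩
      · exact absurd hp (hno j s)
    have := vs_le_of_cube_only k T this
    omega
  by_cases hacube : ∀ i : Fin k, l (unitv k i.1) = 0
  -- degenerate cube functional: every cube vertex lies on F
  · left
    obtain ⟨σ0, hσ0⟩ := hTC
    have hM0 : M = 0 := by
      have := hσ0.2
      rw [l_cube] at this
      rw [← this]
      exact Finset.sum_eq_zero fun i _ => by rw [hacube i]; simp
    intro σ
    have hmem : cubePt k σ ∈ T := by
      refine ⟨cubePt_mem_SF k σ, ?_⟩
      rw [l_cube, hM0]
      exact Finset.sum_eq_zero fun i _ => by rw [hacube i]; simp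
    rw [hFT]
    exact subset_convexHull ℝ _ hmem
  · right
    push_neg at hacube
    obtain ⟨istar, histar⟩ := hacube
    -- b = 0
    have hb : ∀ j : Fin 3, l (unitv k (k + j.1)) = 0 := by
      by_contra hbne
      push_neg at hbne
      obtain ⟨j0, hj0⟩ := hbne
      obtain ⟨j1, s1, hj1⟩ := hTO
      set c : ℝ := l (unitv k (k+3)) with hcdef
      set m : ℝ := M - c with hmdef
      have hval : ∀ (j : Fin 3) (s : Bool), l (octPt k j s)
          = (if s then (1:ℝ) else -1) * l (unitv k (k + j.1)) + c := fun j s => l_oct k l j s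
      have hoctle : ∀ (j : Fin 3) (s : Bool), (if s then (1:ℝ) else -1) * l (unitv k (k + j.1)) ≤ m := by
        intro j s
        have := hmax _ (octPt_mem_SF k j s)
        rw [hval j s] at this
        rw [hmdef]; linarith
      have hmpos : 0 < m := by
        have h1 := hoctle j0 true
        have h2 := hoctle j0 false
        simp only [if_true, Bool.false_eq_true, if_false] at h1 h2
        rcases lt_trichotomy (l (unitv k (k + j0.1))) 0 with h | h | h
        · nlinarith
        · exact absurd h hj0
        · nlinarith
      -- the functional ν
      set νc : Fin (k+4) → ℝ := fun i =>
        if (i:ℕ) = k+3 then -m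
        else if h : k ≤ (i:ℕ) ∧ (i:ℕ) < k+3 then l (unitv k (k + (⟨i.1 - k, by omega⟩ : Fin 3).1))
        else 0 with hνc
      set ν : (Fin (k+4) → ℝ) →ₗ[ℝ] ℝ := lfun k νc with hν
      have hν_cube : ∀ i : Fin k, ν (unitv k i.1) = 0 := by
        intro i
        have hi : (i:ℕ) < k := i.2
        rw [hν, lfun_unitv k _ i.1 (by omega)]
        have e1 : ¬ ((i:ℕ) = k+3) := by omega
        have e2 : ¬ (k ≤ (i:ℕ) ∧ (i:ℕ) < k+3) := by omega
        simp [hνc, e1, e2]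
      have hν_oct : ∀ j : Fin 3, ν (unitv k (k + j.1)) = l (unitv k (k + j.1)) := by
        intro j
        have hj : (j:ℕ) < 3 := j.2
        rw [hν, lfun_unitv k _ (k + j.1) (by omega)]
        have e1 : ¬ ((k + j.1:ℕ) = k+3) := by omega
        have e2 : k ≤ (k + j.1:ℕ) ∧ (k + j.1:ℕ) < k+3 := by omega
        simp only [hνc, e1, if_false]
        rw [dif_pos e2]
        show l (unitv k (k + (k + (j:ℕ) - k))) = l (unitv k (k + (j:ℕ)))
        have h4 : k + (k + (j:ℕ) - k) = k + (j:ℕ) := by omega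
        rw [h4]
      have hν_t : ν (unitv k (k+3)) = -m := by
        rw [hν, lfun_unitv k _ (k+3) (by omega)]
        simp [hνc]
      have hνvan : ∀ p ∈ T, ν p = 0 := by
        intro p hp
        rcases (mem_SF_iff k p).1 hp.1 with ⟨σ, rfl⟩ | ⟨j, s, rfl⟩
        · rw [l_cube]
          exact Finset.sum_eq_zero fun i _ => by rw [hν_cube i]; simp
        · rw [l_oct, hν_oct, hν_t]
          have hpT := hp.2
          rw [hval j s] at hpT
          have : (if s then (1:ℝ) else -1) * l (unitv k (k + j.1)) = m := by
            rw [hmdef]; linarith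
          rw [this]; ring
      have hdet := finrank_vs_le_sub_two T l ν
        (fun p hp q hq => by rw [hp.2, hq.2])
        (fun p hp q hq => by rw [hνvan p hp, hνvan q hq])
        (unitv k istar.1) (unitv k (k+3)) ?_
      · omega
      · rw [hν_t, hν_cube istar]
        intro hcon
        have : l (unitv k istar.1) * m = 0 := by linarith
        rcases mul_eq_zero.1 this with h | h
        · exact histar h
        · rw [h] at hmpos; exact lt_irrefl 0 hmpos
    -- octahedron entirely contained
    have hMc : M = l (unitv k (k+3)) := by
      obtain ⟨j1, s1, hj1⟩ := hTO
      have := hj1.2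
      rw [l_oct, hb j1] at this
      rw [← this]; ring
    have hOT : ∀ (j : Fin 3) (s : Bool), octPt k j s ∈ T := by
      intro j s
      refine ⟨octPt_mem_SF k j s, ?_⟩
      rw [l_oct, hb j, hMc]
      ring
    -- uniqueness of the nonzero cube coefficient
    have huniq : ∀ i : Fin k, i ≠ istar → l (unitv k i.1) = 0 := by
      intro i2 hi2
      by_contra hai2
      -- all cube points of T are forced at istar and i2
      have hforce : ∀ (i : Fin k), l (unitv k i.1) ≠ 0 → ∀ σ, cubePt k σ ∈ T →
          σ i = decide (0 < l (unitv k i.1)) := by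
        intro i hai σ hσ
        exact forced_coord k l M hmax σ hσ.2 i hai
      have hister : istar.1 ≠ i2.1 := fun h => hi2 (Fin.ext h.symm)
      -- build the vanishing functional μ as a case split
      rcases lt_trichotomy (l (unitv k istar.1)) 0 with hneg | h0 | hpos
      · -- μ = proj istar
        have hi4 : istar.1 < k+4 := by have := istar.2; omega
        have hμvan : ∀ p ∈ T, LinearMap.proj (R := ℝ) (φ := fun _ : Fin (k+4) => ℝ)
            ⟨istar.1, hi4⟩ p = 0 := by
          intro p hp
          rcases (mem_SF_iff k p).1 hp.1 with ⟨σ, rfl⟩ | ⟨j, s, rfl⟩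
          · have := hforce istar histar σ hp
            have hd : decide (0 < l (unitv k istar.1)) = false := by
              simp [not_lt.2 (le_of_lt hneg)]
            rw [hd] at this
            rw [LinearMap.proj_apply, cubePt_apply_lt k σ _ (by simpa using istar.2)]
            show (if σ istar = true then (1:ℝ) else 0) = 0
            rw [this]
            simp
          · rw [LinearMap.proj_apply, octPt_apply]
            have hj : (j:ℕ) < 3 := j.2
            have := istar.2
            have e1 : ¬ ((istar.1:ℕ) = k + j.1) := by omega
            have e2 : ¬ ((istar.1:ℕ) = k + 3) := by omega
            rw [if_neg e1, if_neg e2]; ring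
        have hdet := finrank_vs_le_sub_two T l (LinearMap.proj ⟨istar.1, hi4⟩)
          (fun p hp q hq => by rw [hp.2, hq.2])
          (fun p hp q hq => by rw [hμvan p hp, hμvan q hq])
          (unitv k i2.1) (unitv k istar.1) ?_
        · omega
        · have e1 : LinearMap.proj (R := ℝ) (φ := fun _ : Fin (k+4) => ℝ)
              (⟨istar.1, hi4⟩ : Fin (k+4)) (unitv k istar.1) = 1 := by
              rw [proj_unitv, if_pos rfl]
          have e2 : LinearMap.proj (R := ℝ) (φ := fun _ : Fin (k+4) => ℝ)
              (⟨istar.1, hi4⟩ : Fin (k+4)) (unitv k i2.1) = 0 := by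
              rw [proj_unitv, if_neg hister]
          rw [e1, e2]
          intro hcon
          exact hai2 (by linarith)
      · exact histar h0
      · -- second split on sign of a i2
        rcases lt_trichotomy (l (unitv k i2.1)) 0 with hneg2 | h02 | hpos2
        · have hi4 : i2.1 < k+4 := by have := i2.2; omega
          have hμvan : ∀ p ∈ T, LinearMap.proj (R := ℝ) (φ := fun _ : Fin (k+4) => ℝ)
              ⟨i2.1, hi4⟩ p = 0 := by
            intro p hp
            rcases (mem_SF_iff k p).1 hp.1 with ⟨σ, rfl⟩ | ⟨j, s, rfl⟩
            · have := hforce i2 hai2 σ hp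
              have hd : decide (0 < l (unitv k i2.1)) = false := by
                simp [not_lt.2 (le_of_lt hneg2)]
              rw [hd] at this
              rw [LinearMap.proj_apply, cubePt_apply_lt k σ _ (by simpa using i2.2)]
              show (if σ i2 = true then (1:ℝ) else 0) = 0
              rw [this]
              simp
            · rw [LinearMap.proj_apply, octPt_apply]
              have hj : (j:ℕ) < 3 := j.2
              have := i2.2
              have e1 : ¬ ((i2.1:ℕ) = k + j.1) := by omega
              have e2 : ¬ ((i2.1:ℕ) = k + 3) := by omega
              rw [if_neg e1, if_neg e2]; ring
          have hdet := finrank_vs_le_sub_two T l (LinearMap.proj ⟨i2.1, hi4⟩)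
            (fun p hp q hq => by rw [hp.2, hq.2])
            (fun p hp q hq => by rw [hμvan p hp, hμvan q hq])
            (unitv k istar.1) (unitv k i2.1) ?_
          · omega
          · have e1 : LinearMap.proj (R := ℝ) (φ := fun _ : Fin (k+4) => ℝ)
                (⟨i2.1, hi4⟩ : Fin (k+4)) (unitv k i2.1) = 1 := by
                rw [proj_unitv, if_pos rfl]
            have e2 : LinearMap.proj (R := ℝ) (φ := fun _ : Fin (k+4) => ℝ)
                (⟨i2.1, hi4⟩ : Fin (k+4)) (unitv k istar.1) = 0 := by
                rw [proj_unitv, if_neg (Ne.symm hister)]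
            rw [e1, e2]
            intro hcon
            exact histar (by linarith)
        · exact hai2 h02
        · -- both positive: μ = proj istar - proj i2
          have hi4 : istar.1 < k+4 := by have := istar.2; omega
          have hi4' : i2.1 < k+4 := by have := i2.2; omega
          set μ : (Fin (k+4) → ℝ) →ₗ[ℝ] ℝ :=
            LinearMap.proj ⟨istar.1, hi4⟩ - LinearMap.proj ⟨i2.1, hi4'⟩ with hμ
          have hcoordcube : ∀ (i : Fin k) (hi : i.1 < k+4) (σ : Fin k → Bool), cubePt k σ ∈ T →
              l (unitv k i.1) ≠ 0 → 0 < l (unitv k i.1) →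
              cubePt k σ ⟨i.1, hi⟩ = 1 := by
            intro i hi σ hσT hne hpos'
            have := hforce i hne σ hσT
            have hd : decide (0 < l (unitv k i.1)) = true := by simp [hpos']
            rw [hd] at this
            rw [cubePt_apply_lt k σ _ (by simpa using i.2)]
            show (if σ i = true then (1:ℝ) else 0) = 1
            rw [this]
            simp
          have hμvan : ∀ p ∈ T, μ p = 0 := by
            intro p hp
            rcases (mem_SF_iff k p).1 hp.1 with ⟨σ, rfl⟩ | ⟨j, s, rfl⟩
            · rw [hμ, LinearMap.sub_apply, LinearMap.proj_apply, LinearMap.proj_apply]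
              rw [hcoordcube istar hi4 σ hp histar hpos,
                hcoordcube i2 hi4' σ hp hai2 hpos2]
              ring
            · rw [hμ, LinearMap.sub_apply, LinearMap.proj_apply, LinearMap.proj_apply,
                octPt_apply, octPt_apply]
              have hj : (j:ℕ) < 3 := j.2
              have h1 := istar.2
              have h2 := i2.2
              have e1 : ¬ ((istar.1:ℕ) = k + j.1) := by omega
              have e2 : ¬ ((istar.1:ℕ) = k + 3) := by omega
              have e3 : ¬ ((i2.1:ℕ) = k + j.1) := by omega
              have e4 : ¬ ((i2.1:ℕ) = k + 3) := by omega
              rw [if_neg e1, if_neg e2, if_neg e3, if_neg e4]; ring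
          have hdet := finrank_vs_le_sub_two T l μ
            (fun p hp q hq => by rw [hp.2, hq.2])
            (fun p hp q hq => by rw [hμvan p hp, hμvan q hq])
            (unitv k istar.1) (unitv k i2.1) ?_
          · omega
          · rw [hμ, LinearMap.sub_apply, LinearMap.sub_apply]
            have e1 : LinearMap.proj (R := ℝ) (φ := fun _ : Fin (k+4) => ℝ)
                (⟨istar.1, hi4⟩ : Fin (k+4)) (unitv k istar.1) = 1 := by
                rw [proj_unitv, if_pos rfl]
            have e2 : LinearMap.proj (R := ℝ) (φ := fun _ : Fin (k+4) => ℝ)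
                (⟨istar.1, hi4⟩ : Fin (k+4)) (unitv k i2.1) = 0 := by
                rw [proj_unitv, if_neg hister]
            have e3 : LinearMap.proj (R := ℝ) (φ := fun _ : Fin (k+4) => ℝ)
                (⟨i2.1, hi4'⟩ : Fin (k+4)) (unitv k i2.1) = 1 := by
                rw [proj_unitv, if_pos rfl]
            have e4 : LinearMap.proj (R := ℝ) (φ := fun _ : Fin (k+4) => ℝ)
                (⟨i2.1, hi4'⟩ : Fin (k+4)) (unitv k istar.1) = 0 := by
                rw [proj_unitv, if_neg (Ne.symm hister)]
            rw [e1, e2, e3, e4]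
            intro hcon
            nlinarith
    -- now: exactly one nonzero cube coefficient at istar, b = 0, O ⊆ T
    set ε : Bool := decide (0 < l (unitv k istar.1)) with hε
    have hcubeval : ∀ σ : Fin k → Bool,
        l (cubePt k σ) = if σ istar then l (unitv k istar.1) else 0 :=
      l_cube_single k l istar huniq
    obtain ⟨σ0, hσ0⟩ := hTC
    have hσ0f : σ0 istar = ε := forced_coord k l M hmax σ0 hσ0.2 istar histar
    have hMval : M = if ε then l (unitv k istar.1) else 0 := by
      have := hσ0.2
      rw [hcubeval σ0, hσ0f] at this
      exact this.symm
    have hTeq : T = Uset k istar ε := by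
      ext x
      constructor
      · rintro ⟨hxSF, hxM⟩
        rcases (mem_SF_iff k x).1 hxSF with ⟨σ, rfl⟩ | ⟨j, s, rfl⟩
        · exact Or.inl ⟨σ, forced_coord k l M hmax σ hxM istar histar, rfl⟩
        · exact Or.inr ⟨j, s, rfl⟩
      · rintro (⟨σ, hσε, rfl⟩ | ⟨j, s, rfl⟩)
        · refine ⟨cubePt_mem_SF k σ, ?_⟩
          rw [hcubeval σ, hσε, hMval]
        · exact hOT j s
    exact ⟨istar, ε, by rw [hFT, hTeq]⟩

lemma two_mul_lt_two_pow : ∀ k : ℕ, 3 ≤ k → 2*k < 2^k := by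
  intro k hk
  induction k with
  | zero => omega
  | succ n ih =>
    rcases Nat.lt_or_ge n 3 with h | h
    · interval_cases n <;> simp_all <;> omega
    · have := ih h
      have h2 : 2 ≤ 2^n := by
        calc 2 = 2^1 := by norm_num
        _ ≤ 2^n := Nat.pow_le_pow_right (by norm_num) (by omega)
      rw [pow_succ]
      omega

lemma no_vfa (hk : 3 ≤ k) : ¬ HasVFA (P k) := by
  rintro (⟨f, hfinj, hfni⟩ | ⟨g, hginj, hgni⟩)
  · -- no injection from vertices to non-incident facets
    have KEY : ∀ σ : Fin k → Bool, ∃ p : Fin k × Bool,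
        ((f ⟨cubePt k σ, cube_extremePoint k σ⟩ : Set (Fin (k+4) → ℝ)))
          = convexHull ℝ (Uset k p.1 p.2) := by
      intro σ
      rcases facet_classification k hk _ (f ⟨cubePt k σ, cube_extremePoint k σ⟩).2
        with hall | ⟨i0, ε, heq⟩
      · exact absurd (hall σ) (hfni ⟨cubePt k σ, cube_extremePoint k σ⟩)
      · exact ⟨(i0, ε), heq⟩
    choose Φ hΦ using KEY
    have hΦinj : Function.Injective Φ := by
      intro σ1 σ2 h
      have h1 : ((f ⟨cubePt k σ1, cube_extremePoint k σ1⟩ : Set (Fin (k+4) → ℝ)))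
          = ((f ⟨cubePt k σ2, cube_extremePoint k σ2⟩ : Set (Fin (k+4) → ℝ))) := by
        rw [hΦ σ1, hΦ σ2, h]
      have h3 := hfinj (Subtype.ext h1)
      have h4 : cubePt k σ1 = cubePt k σ2 := congrArg Subtype.val h3
      exact cubePt_injective k h4
    have hcard := Fintype.card_le_of_injective Φ hΦinj
    rw [Fintype.card_fun, Fintype.card_prod] at hcard
    simp only [Fintype.card_fin, Fintype.card_bool] at hcard
    have := two_mul_lt_two_pow k hk
    omega
  · -- no injection from facets to non-incident vertices
    have KEY : ∀ s : Fin 3 → Bool, ∃ p : Fin 3 × Bool,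
        ((g ⟨convexHull ℝ (Tset k s), Fo_mem_facets k s⟩ : Fin (k+4) → ℝ))
          = octPt k p.1 p.2 := by
      intro s
      have hvS : ((g ⟨convexHull ℝ (Tset k s), Fo_mem_facets k s⟩ : Fin (k+4) → ℝ)) ∈ SF k :=
        extremePoints_subset_SF k (g ⟨convexHull ℝ (Tset k s), Fo_mem_facets k s⟩).2
      rcases (mem_SF_iff k _).1 hvS with ⟨σ, hσ⟩ | ⟨j, b, hb⟩
      · exfalso
        apply hgni ⟨convexHull ℝ (Tset k s), Fo_mem_facets k s⟩
        rw [hσ]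
        exact cube_subset_Fo k s σ
      · exact ⟨(j, b), hb⟩
    choose Ψ hΨ using KEY
    have hΨinj : Function.Injective Ψ := by
      intro s1 s2 h
      have h1 : ((g ⟨convexHull ℝ (Tset k s1), Fo_mem_facets k s1⟩ : Fin (k+4) → ℝ))
          = ((g ⟨convexHull ℝ (Tset k s2), Fo_mem_facets k s2⟩ : Fin (k+4) → ℝ)) := by
        rw [hΨ s1, hΨ s2, h]
      have h3 := hginj (Subtype.ext h1)
      have h4 : convexHull ℝ (Tset k s1) = convexHull ℝ (Tset k s2) :=
        congrArg Subtype.val h3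
      exact Fo_injective k h4
    have hcard := Fintype.card_le_of_injective Ψ hΨinj
    rw [Fintype.card_fun, Fintype.card_prod] at hcard
    simp only [Fintype.card_fin, Fintype.card_bool] at hcard
    norm_num at hcard

end VFA

/-- For every `d ≥ 7` there is a full-dimensional polytope `P ⊆ ℝ^d`
without a vertex-facet assignment. -/
theorem exists_no_vfa_of_dim_ge_seven (d : ℕ) (hd : 7 ≤ d) :
    ∃ P : Set (Fin d → ℝ), IsPolytope P ∧ affineSpan ℝ P = ⊤ ∧ ¬ HasVFA P := by
  obtain ⟨k, rfl⟩ : ∃ k, d = k + 4 := ⟨d - 4, by omega⟩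
  have hk : 3 ≤ k := by omega
  exact ⟨VFA.P k, VFA.isPolytope_P k, VFA.affineSpan_P_top k, VFA.no_vfa k hk⟩
end

section
/- For every integer j ≥ 3, the free join of the j-dimensional cube [0,1]^j ⊆ ℝ^j and the j-dimensional cross-polytope conv{±e_1, …, ±e_j} ⊆ ℝ^j is a full-dimensional polytope in ℝ^{2j+1} that does not have a vertex-facet assignment. -/
/-- Embedding of the first factor `ℝ^{d₁}` into `ℝ^{d₁} × ℝ^{d₂} × ℝ ≅ ℝ^{d₁+d₂+1}`,
`x ↦ (x, 0, 0)`. -/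
def joinEmb₁ {d₁ d₂ : ℕ} (x : Fin d₁ → ℝ) : (Fin d₁ → ℝ) × (Fin d₂ → ℝ) × ℝ := (x, 0, 0)

/-- Embedding of the second factor `ℝ^{d₂}` into `ℝ^{d₁} × ℝ^{d₂} × ℝ ≅ ℝ^{d₁+d₂+1}`,
`y ↦ (0, y, 1)`. -/
def joinEmb₂ {d₁ d₂ : ℕ} (y : Fin d₂ → ℝ) : (Fin d₁ → ℝ) × (Fin d₂ → ℝ) × ℝ := (0, y, 1)

/-- The free join `P₁ ⋈ P₂ ⊆ ℝ^{d₁} × ℝ^{d₂} × ℝ ≅ ℝ^{d₁+d₂+1}`: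
the convex hull of `{(x,0,0) : x ∈ P₁} ∪ {(0,y,1) : y ∈ P₂}`. -/
def freeJoin {d₁ d₂ : ℕ} (P₁ : Set (Fin d₁ → ℝ)) (P₂ : Set (Fin d₂ → ℝ)) :
    Set ((Fin d₁ → ℝ) × (Fin d₂ → ℝ) × ℝ) :=
  convexHull ℝ (joinEmb₁ '' P₁ ∪ joinEmb₂ '' P₂)

namespace CJC

open Set Module Function

abbrev Ej (j : ℕ) := (Fin j → ℝ) × (Fin j → ℝ) × ℝ

variable {j : ℕ}

def cubeV (j : ℕ) : Set (Fin j → ℝ) := {x | ∀ i, x i = 0 ∨ x i = 1}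
def crossV (j : ℕ) : Set (Fin j → ℝ) := {x | ∃ i, x = Pi.single i 1 ∨ x = -Pi.single i 1}
def genV (j : ℕ) : Set (Ej j) := joinEmb₁ '' cubeV j ∪ joinEmb₂ '' crossV j

noncomputable def φL (a b : Fin j → ℝ) (c : ℝ) : Ej j →ₗ[ℝ] ℝ where
  toFun p := (∑ i, a i * p.1 i) + ((∑ i, b i * p.2.1 i) + c * p.2.2)
  map_add' p q := by
    simp only [Prod.fst_add, Prod.snd_add, Pi.add_apply, mul_add, Finset.sum_add_distrib]
    ring
  map_smul' r p := by
    simp only [Prod.smul_fst, Prod.smul_snd, Pi.smul_apply, smul_eq_mul, RingHom.id_apply,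
      Finset.mul_sum]
    ring_nf
    rw [Finset.mul_sum, Finset.mul_sum]
    ring_nf

noncomputable def φC (a b : Fin j → ℝ) (c : ℝ) : Ej j →L[ℝ] ℝ :=
  (φL a b c).toContinuousLinearMap

lemma φC_apply (a b : Fin j → ℝ) (c : ℝ) (p : Ej j) :
    φC a b c p = (∑ i, a i * p.1 i) + ((∑ i, b i * p.2.1 i) + c * p.2.2) := rfl

lemma φC_emb₁ (a b : Fin j → ℝ) (c : ℝ) (v : Fin j → ℝ) :
    φC a b c (joinEmb₁ v) = ∑ i, a i * v i := by
  simp [φC_apply, joinEmb₁]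

lemma φC_emb₂ (a b : Fin j → ℝ) (c : ℝ) (y : Fin j → ℝ) :
    φC a b c (joinEmb₂ y) = (∑ i, b i * y i) + c := by
  simp [φC_apply, joinEmb₂]

lemma sum_mul_smul_single (b : Fin j → ℝ) (i : Fin j) (τ : ℝ) :
    (∑ i', b i' * (τ • (Pi.single i 1 : Fin j → ℝ)) i') = τ * b i := by
  rw [Finset.sum_eq_single i]
  · simp [mul_comm]
  · intro i' _ hne
    simp [Pi.single_apply, Ne.symm hne]
  · simp


section Generic
variable {W : Type*} [NormedAddCommGroup W] [NormedSpace ℝ W]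

lemma hull_le {S : Set W} (ℓ : W →L[ℝ] ℝ) {M : ℝ} (h : ∀ v ∈ S, ℓ v ≤ M) :
    ∀ p ∈ convexHull ℝ S, ℓ p ≤ M := fun p hp =>
  convexHull_min h (convex_halfSpace_le ⟨fun _ _ => map_add ℓ _ _, fun c x => ℓ.map_smul c x⟩ M) hp

lemma hull_eq {S : Set W} (ℓ : W →L[ℝ] ℝ) {M : ℝ} (h : ∀ v ∈ S, ℓ v = M) :
    ∀ p ∈ convexHull ℝ S, ℓ p = M := fun p hp =>
  convexHull_min h (convex_hyperplane ⟨fun _ _ => map_add ℓ _ _, fun c x => ℓ.map_smul c x⟩ M) hp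

/-- The exposed face of a hull of a finite set is the hull of the argmax subset. -/
lemma face_eq_hull_argmax {S : Set W} (hS : S.Finite) (ℓ : W →L[ℝ] ℝ) {M : ℝ}
    (hM : ∃ v ∈ S, ℓ v = M) (hle : ∀ v ∈ S, ℓ v ≤ M) :
    {x ∈ convexHull ℝ S | ∀ y ∈ convexHull ℝ S, ℓ y ≤ ℓ x}
      = convexHull ℝ {v ∈ S | ℓ v = M} := by
  obtain ⟨v₀, hv₀S, hv₀⟩ := hM
  set A : Set W := {v ∈ S | ℓ v = M} with hA
  have hAne : A.Nonempty := ⟨v₀, hv₀S, hv₀⟩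
  have hAS : A ⊆ S := fun v hv => hv.1
  have hsub : convexHull ℝ A ⊆ convexHull ℝ S := convexHull_mono hAS
  have hconstA : ∀ p ∈ convexHull ℝ A, ℓ p = M := hull_eq ℓ fun v hv => hv.2
  apply Set.Subset.antisymm
  · intro x hx
    obtain ⟨hxQ, hxmax⟩ := hx
    have hxM : ℓ x = M := le_antisymm (hull_le ℓ hle x hxQ)
      (hv₀ ▸ hxmax v₀ (subset_convexHull ℝ S hv₀S))
    by_cases hB : (S \ A).Nonempty
    · obtain ⟨w₀, hw₀, hw₀max⟩ := Set.exists_max_image _ ℓ hS.diff hB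
      have hw₀M : ℓ w₀ < M := lt_of_le_of_ne (hle w₀ hw₀.1) (fun h => hw₀.2 ⟨hw₀.1, h⟩)
      have hSsplit : S = A ∪ (S \ A) := by rw [Set.union_diff_cancel hAS]
      have hx' : x ∈ convexHull ℝ (A ∪ (S \ A)) := hSsplit ▸ hxQ
      rw [convexHull_union hAne hB, mem_convexJoin] at hx'
      obtain ⟨u, hu, w, hw, hseg⟩ := hx'
      obtain ⟨t₁, t₂, ht₁, ht₂, hsum, hx12⟩ := hseg
      have hℓu : ℓ u = M := hconstA u hu
      have hℓw : ℓ w ≤ ℓ w₀ := hull_le ℓ (fun v hv => hw₀max v hv) w hw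
      have hxval : t₁ * ℓ u + t₂ * ℓ w = M := by
        rw [← hxM, ← hx12]; simp [map_add, ℓ.map_smul, smul_eq_mul]
      have ht₂0 : t₂ = 0 := by
        by_contra hne
        have hpos : 0 < t₂ := ht₂.lt_of_ne (Ne.symm hne)
        have hlt : ℓ w < M := hℓw.trans_lt hw₀M
        have hmul := mul_lt_mul_of_pos_left hlt hpos
        rw [hℓu] at hxval
        have hexp : t₁ * M + t₂ * M = M := by rw [← add_mul, hsum, one_mul]
        linarith
      have : x = u := by
        rw [← hx12, ht₂0]
        have : t₁ = 1 := by linarith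
        simp [this]
      exact this ▸ hu
    · rw [Set.not_nonempty_iff_eq_empty, Set.diff_eq_empty] at hB
      have hSA : S = A := Set.Subset.antisymm hB hAS
      rw [← hSA]
      exact hxQ
  · intro x hx
    refine ⟨hsub hx, fun y hy => ?_⟩
    rw [hconstA x hx]
    exact hull_le ℓ hle y hy

lemma extremePoint_of_strict_max {S : Set W} (hS : S.Finite) (ℓ : W →L[ℝ] ℝ) {v : W}
    (hv : v ∈ S) (h : ∀ w ∈ S, w ≠ v → ℓ w < ℓ v) :
    v ∈ (convexHull ℝ S).extremePoints ℝ := by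
  have hle : ∀ w ∈ S, ℓ w ≤ ℓ v := fun w hw => by
    rcases eq_or_ne w v with rfl | hne
    · exact le_refl _
    · exact (h w hw hne).le
  have hface := face_eq_hull_argmax hS ℓ ⟨v, hv, rfl⟩ hle
  have hargmax : {w ∈ S | ℓ w = ℓ v} = {v} := by
    ext w
    constructor
    · rintro ⟨hwS, hwℓ⟩
      by_contra hne
      exact absurd hwℓ (ne_of_lt (h w hwS hne))
    · rintro rfl; exact ⟨hv, rfl⟩
  rw [hargmax, convexHull_singleton] at hface
  have hexp : IsExposed ℝ (convexHull ℝ S) {v} := fun _ => ⟨ℓ, hface.symm⟩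
  exact hexp.isExtreme.mem_extremePoints

lemma vectorSpan_le_ker {A : Set W} {W' : Type*} [AddCommGroup W'] [Module ℝ W']
    (g : W →ₗ[ℝ] W') (w : W') (h : ∀ p ∈ A, g p = w) :
    vectorSpan ℝ A ≤ LinearMap.ker g := by
  rw [vectorSpan_def, Submodule.span_le]
  rintro x hx
  obtain ⟨p, hp, q, hq, rfl⟩ := hx
  simp [LinearMap.mem_ker, vsub_eq_sub, map_sub, h p hp, h q hq]

lemma finrank_le_of_le_ker {W' : Type*} [NormedAddCommGroup W'] [NormedSpace ℝ W']
    [FiniteDimensional ℝ W] [FiniteDimensional ℝ W']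
    (Φ : W →ₗ[ℝ] W') (hs : LinearMap.range Φ = ⊤) {D : Submodule ℝ W}
    (hD : D ≤ LinearMap.ker Φ) :
    finrank ℝ D ≤ finrank ℝ W - finrank ℝ W' := by
  have h1 := Φ.finrank_range_add_finrank_ker
  rw [hs, finrank_top] at h1
  have h2 : finrank ℝ D ≤ finrank ℝ (LinearMap.ker Φ) := Submodule.finrank_mono hD
  omega

lemma finrank_le_of_two_functionals [FiniteDimensional ℝ W] (ψ₁ ψ₂ : W →ₗ[ℝ] ℝ)
    {D : Submodule ℝ W} (h₁ : D ≤ LinearMap.ker ψ₁) (h₂ : D ≤ LinearMap.ker ψ₂)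
    (p q : W) (hdet : ψ₁ p * ψ₂ q - ψ₁ q * ψ₂ p ≠ 0) :
    finrank ℝ D ≤ finrank ℝ W - 2 := by
  have hRR : finrank ℝ (ℝ × ℝ) = 2 := by
    simp [Module.finrank_prod]
  have hrange : LinearMap.range (ψ₁.prod ψ₂) = ⊤ := by
    rw [LinearMap.range_eq_top]
    intro z
    refine ⟨((z.1 * ψ₂ q - z.2 * ψ₁ q) / (ψ₁ p * ψ₂ q - ψ₁ q * ψ₂ p)) • p
      + ((z.2 * ψ₁ p - z.1 * ψ₂ p) / (ψ₁ p * ψ₂ q - ψ₁ q * ψ₂ p)) • q, ?_⟩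
    have hd : ψ₂ q * ψ₁ p - ψ₁ q * ψ₂ p ≠ 0 := by intro h; apply hdet; linarith
    apply Prod.ext
    · simp only [LinearMap.prod_apply, Function.prod, map_add, map_smul, smul_eq_mul, Prod.fst_add,
        Prod.snd_add, Prod.smul_fst, Prod.smul_snd]
      field_simp
      ring
    · simp only [LinearMap.prod_apply, Function.prod, map_add, map_smul, smul_eq_mul, Prod.fst_add,
        Prod.snd_add, Prod.smul_fst, Prod.smul_snd]
      field_simp
      ring
  have hker : D ≤ LinearMap.ker (ψ₁.prod ψ₂) := by
    rw [LinearMap.ker_prod]; exact le_inf h₁ h₂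
  have := finrank_le_of_le_ker (ψ₁.prod ψ₂) hrange hker
  rwa [hRR] at this

end Generic

lemma finrank_Ej : finrank ℝ (Ej j) = 2*j + 1 := by
  rw [Module.finrank_prod, Module.finrank_prod, Module.finrank_pi,
    Module.finrank_self, Fintype.card_fin]
  omega

lemma decomp (p : Ej j) :
    p = (∑ i, p.1 i • ((Pi.single i 1 : Fin j → ℝ), (0 : Fin j → ℝ), (0:ℝ)))
      + (∑ i, p.2.1 i • ((0 : Fin j → ℝ), (Pi.single i 1 : Fin j → ℝ), (0:ℝ)))
      + p.2.2 • ((0 : Fin j → ℝ), (0 : Fin j → ℝ), (1:ℝ)) := by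
  apply Prod.ext
  · simp only [Prod.fst_add, Prod.fst_sum, Prod.smul_fst, smul_zero, Finset.sum_const_zero,
      add_zero]
    funext k
    simp [Pi.single_apply]
  · apply Prod.ext
    · simp only [Prod.snd_add, Prod.fst_add, Prod.snd_sum, Prod.fst_sum, Prod.smul_snd,
        Prod.smul_fst, smul_zero, Finset.sum_const_zero, zero_add, add_zero]
      funext k
      simp [Pi.single_apply]
    · simp [Prod.snd_sum, Prod.fst_sum]

lemma repr_CLM (ℓ : Ej j →L[ℝ] ℝ) :
    ∀ p, ℓ p = φC (fun i => ℓ (Pi.single i 1, 0, 0)) (fun i => ℓ (0, Pi.single i 1, 0))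
      (ℓ ((0 : Fin j → ℝ), (0 : Fin j → ℝ), (1:ℝ))) p := by
  intro p
  rw [φC_apply]
  conv_lhs => rw [decomp p]
  simp only [map_add, map_sum, map_smul, smul_eq_mul]
  have e1 : ∑ x, p.1 x * ℓ ((Pi.single x 1 : Fin j → ℝ), (0:Fin j → ℝ), (0:ℝ))
      = ∑ i, ℓ ((Pi.single i 1 : Fin j → ℝ), (0:Fin j → ℝ), (0:ℝ)) * p.1 i :=
    Finset.sum_congr rfl fun i _ => mul_comm _ _
  have e2 : ∑ x, p.2.1 x * ℓ ((0:Fin j → ℝ), (Pi.single x 1 : Fin j → ℝ), (0:ℝ))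
      = ∑ i, ℓ ((0:Fin j → ℝ), (Pi.single i 1 : Fin j → ℝ), (0:ℝ)) * p.2.1 i :=
    Finset.sum_congr rfl fun i _ => mul_comm _ _
  rw [e1, e2]
  ring

/-! Cube argmax -/

lemma cube_term_le (ai vi : ℝ) (hv : vi = 0 ∨ vi = 1) : ai * vi ≤ max ai 0 := by
  rcases hv with h | h <;> subst h <;> simp

lemma cube_le (a : Fin j → ℝ) {v : Fin j → ℝ} (hv : v ∈ cubeV j) :
    ∑ i, a i * v i ≤ ∑ i, max (a i) 0 :=
  Finset.sum_le_sum fun i _ => cube_term_le _ _ (hv i)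

lemma cube_eq_iff (a : Fin j → ℝ) {v : Fin j → ℝ} (hv : v ∈ cubeV j) :
    (∑ i, a i * v i = ∑ i, max (a i) 0)
      ↔ ∀ i, (0 < a i → v i = 1) ∧ (a i < 0 → v i = 0) := by
  rw [Finset.sum_eq_sum_iff_of_le (fun i _ => cube_term_le _ _ (hv i))]
  constructor
  · intro h i
    have hi := h i (Finset.mem_univ i)
    constructor
    · intro hpos
      rcases hv i with h0 | h1
      · rw [h0, mul_zero] at hi
        rw [max_eq_left hpos.le] at hi
        exact absurd hi.symm (ne_of_gt hpos)
      · exact h1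
    · intro hneg
      rcases hv i with h0 | h1
      · exact h0
      · rw [h1, mul_one] at hi
        rw [max_eq_right hneg.le] at hi
        exact absurd hi (ne_of_lt hneg)
  · intro h i _
    rcases lt_trichotomy (a i) 0 with hneg | hz | hpos
    · rw [(h i).2 hneg, mul_zero, max_eq_right hneg.le]
    · rcases hv i with h0 | h1 <;> simp [hz]
    · rw [(h i).1 hpos, mul_one, max_eq_left hpos.le]

lemma vstar_mem (a : Fin j → ℝ) : (fun i => if 0 < a i then (1:ℝ) else 0) ∈ cubeV j := by
  intro i
  by_cases h : 0 < a i <;> simp [h]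

lemma vstar_val (a : Fin j → ℝ) :
    ∑ i, a i * (if 0 < a i then (1:ℝ) else 0) = ∑ i, max (a i) 0 := by
  apply Finset.sum_congr rfl
  intro i _
  by_cases h : 0 < a i
  · rw [if_pos h, mul_one, max_eq_left h.le]
  · rw [if_neg h, mul_zero, max_eq_right (not_lt.mp h)]

/-! Finiteness and basic membership -/

lemma cubeV_eq_pi : cubeV j = Set.pi Set.univ (fun _ : Fin j => ({0, 1} : Set ℝ)) := by
  ext x
  simp [cubeV, Set.mem_pi]

lemma cubeV_finite : (cubeV j).Finite := by
  rw [cubeV_eq_pi]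
  exact Set.Finite.pi fun i => (Set.finite_singleton _).insert _

lemma crossV_finite : (crossV j).Finite := by
  have : crossV j ⊆ ⋃ i : Fin j, {Pi.single i 1, -Pi.single i 1} := by
    rintro x ⟨i, h | h⟩ <;> exact Set.mem_iUnion.mpr ⟨i, by simp [h]⟩
  exact Set.Finite.subset (Set.finite_iUnion fun i => (Set.finite_singleton _).insert _) this

lemma genV_finite : (genV j).Finite :=
  ((cubeV_finite).image _).union ((crossV_finite).image _)

lemma zero_mem_cubeV : (0 : Fin j → ℝ) ∈ cubeV j := fun i => Or.inl rfl

lemma single_mem_cubeV (i : Fin j) : (Pi.single i 1 : Fin j → ℝ) ∈ cubeV j := by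
  intro k
  rcases eq_or_ne i k with rfl | h
  · right; simp
  · left; simp [Pi.single_apply, h]

lemma smul_single_mem_crossV (i : Fin j) (b : Bool) :
    ((cond b 1 (-1) : ℝ) • (Pi.single i 1 : Fin j → ℝ)) ∈ crossV j := by
  refine ⟨i, ?_⟩
  cases b
  · right; simp [neg_smul, one_smul]
  · left; simp

/-! The polytope Q -/

def Qset (j : ℕ) : Set (Ej j) := convexHull ℝ (genV j)

lemma cube_eq_hull : {x : Fin j → ℝ | ∀ i, x i ∈ Set.Icc (0:ℝ) 1} = convexHull ℝ (cubeV j) := by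
  rw [cubeV_eq_pi, convexHull_pi]
  ext x
  simp only [Set.mem_setOf_eq, Set.mem_pi, Set.mem_univ, forall_true_left]
  have h : convexHull ℝ ({0, 1} : Set ℝ) = Set.Icc (0:ℝ) 1 := by
    rw [convexHull_pair, segment_eq_Icc zero_le_one]
  exact forall_congr' fun i => by rw [h]

noncomputable def aemb₁ (j : ℕ) : (Fin j → ℝ) →ᵃ[ℝ] Ej j :=
  (LinearMap.prod LinearMap.id 0).toAffineMap

noncomputable def aemb₂ (j : ℕ) : (Fin j → ℝ) →ᵃ[ℝ] Ej j where
  toFun := joinEmb₂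
  linear := LinearMap.prod 0 (LinearMap.prod LinearMap.id 0)
  map_vadd' p v := by
    apply Prod.ext
    · simp [joinEmb₂]
    · apply Prod.ext <;> simp [joinEmb₂]

lemma joinEmb₁_eq_aemb : (joinEmb₁ : (Fin j → ℝ) → Ej j) = ⇑(aemb₁ j) := rfl

lemma joinEmb₂_eq_aemb : (joinEmb₂ : (Fin j → ℝ) → Ej j) = ⇑(aemb₂ j) := rfl

lemma freeJoin_eq :
    freeJoin {x : Fin j → ℝ | ∀ i, x i ∈ Set.Icc (0:ℝ) 1} (convexHull ℝ (crossV j)) = Qset j := by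
  rw [freeJoin, cube_eq_hull, joinEmb₁_eq_aemb, joinEmb₂_eq_aemb,
    AffineMap.image_convexHull, AffineMap.image_convexHull,
    convexHull_convexHull_union_left, convexHull_convexHull_union_right]
  rfl

lemma emb₁_mem_Q {v : Fin j → ℝ} (hv : v ∈ cubeV j) : joinEmb₁ v ∈ Qset j :=
  subset_convexHull ℝ _ (Or.inl ⟨v, hv, rfl⟩)

lemma emb₂_mem_Q {y : Fin j → ℝ} (hy : y ∈ crossV j) : joinEmb₂ y ∈ Qset j :=
  subset_convexHull ℝ _ (Or.inr ⟨y, hy, rfl⟩)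

lemma joinEmb₁_zero : (joinEmb₁ 0 : Ej j) = 0 := rfl

lemma zero_mem_Q : (0 : Ej j) ∈ Qset j := joinEmb₁_zero ▸ emb₁_mem_Q zero_mem_cubeV

lemma affineSpan_Q_top (hj : 1 ≤ j) : affineSpan ℝ (Qset j) = ⊤ := by
  have h0 : (0 : Ej j) ∈ Qset j := zero_mem_Q
  have hmem : ∀ p ∈ Qset j, p ∈ vectorSpan ℝ (Qset j) := fun p hp => by
    simpa using vsub_mem_vectorSpan ℝ hp h0
  have hgen1 : ∀ i : Fin j, ((Pi.single i 1 : Fin j → ℝ), (0:Fin j → ℝ), (0:ℝ))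
      ∈ vectorSpan ℝ (Qset j) := fun i =>
    hmem _ (emb₁_mem_Q (single_mem_cubeV i))
  have hgen2p : ∀ i : Fin j, ((0:Fin j → ℝ), (Pi.single i 1 : Fin j → ℝ), (1:ℝ))
      ∈ vectorSpan ℝ (Qset j) := fun i =>
    hmem _ (emb₂_mem_Q ⟨i, Or.inl rfl⟩)
  have hgen2m : ∀ i : Fin j, ((0:Fin j → ℝ), (-Pi.single i 1 : Fin j → ℝ), (1:ℝ))
      ∈ vectorSpan ℝ (Qset j) := fun i =>
    hmem _ (emb₂_mem_Q ⟨i, Or.inr rfl⟩)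
  have hgen2 : ∀ i : Fin j, ((0:Fin j → ℝ), (Pi.single i 1 : Fin j → ℝ), (0:ℝ))
      ∈ vectorSpan ℝ (Qset j) := by
    intro i
    have := Submodule.smul_mem _ (2⁻¹ : ℝ)
      (Submodule.sub_mem _ (hgen2p i) (hgen2m i))
    convert this using 1
    apply Prod.ext
    · simp
    · apply Prod.ext
      · funext k
        by_cases h : i = k <;> simp [Pi.single_apply, h] <;> ring
      · simp
  have hgen3 : ((0:Fin j → ℝ), (0:Fin j → ℝ), (1:ℝ)) ∈ vectorSpan ℝ (Qset j) := by
    have i0 : Fin j := ⟨0, hj⟩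
    have := Submodule.sub_mem _ (hgen2p i0) (hgen2 i0)
    convert this using 1
    apply Prod.ext
    · simp
    · apply Prod.ext <;> simp
  have htop : vectorSpan ℝ (Qset j) = ⊤ := by
    rw [eq_top_iff]
    intro p _
    rw [decomp p]
    refine Submodule.add_mem _ (Submodule.add_mem _ ?_ ?_) (Submodule.smul_mem _ _ hgen3)
    · exact Submodule.sum_mem _ fun i _ => Submodule.smul_mem _ _ (hgen1 i)
    · exact Submodule.sum_mem _ fun i _ => Submodule.smul_mem _ _ (hgen2 i)
  rw [eq_top_iff]
  intro p _
  have hd : p - 0 ∈ (affineSpan ℝ (Qset j)).direction := by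
    rw [direction_affineSpan, htop]; trivial
  simpa using AffineSubspace.vadd_mem_of_mem_direction hd (mem_affineSpan ℝ h0)

/-! Cube vertices are extreme points -/

lemma vert_term {ui vi : ℝ} (hu : ui = 0 ∨ ui = 1) (hv : vi = 0 ∨ vi = 1) :
    (2*vi - 1) * ui ≤ (2*vi - 1) * vi ∧ (ui ≠ vi → (2*vi - 1) * ui < (2*vi - 1) * vi) := by
  rcases hu with rfl | rfl <;> rcases hv with rfl | rfl <;> norm_num

lemma extreme_cube_vertex {v : Fin j → ℝ} (hv : v ∈ cubeV j) :
    joinEmb₁ v ∈ (Qset j).extremePoints ℝ := by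
  have hval : ∀ u : Fin j → ℝ,
      φC (fun i => 2 * v i - 1) (0 : Fin j → ℝ) (-(j+1)) (joinEmb₁ u)
        = ∑ i, (2 * v i - 1) * u i := fun u => φC_emb₁ _ _ _ _
  have hnn : (0:ℝ) ≤ ∑ i, (2 * v i - 1) * v i :=
    Finset.sum_nonneg fun i _ => by rcases hv i with h | h <;> rw [h] <;> norm_num
  apply extremePoint_of_strict_max genV_finite (φC (fun i => 2 * v i - 1) 0 (-(j+1)))
    (Or.inl ⟨v, hv, rfl⟩)
  rintro w (⟨u, hu, rfl⟩ | ⟨y, hy, rfl⟩)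
  · intro hne
    have hune : u ≠ v := fun h => hne (by rw [h])
    rw [hval, hval]
    apply Finset.sum_lt_sum
    · exact fun i _ => (vert_term (hu i) (hv i)).1
    · obtain ⟨i, hi⟩ := Function.ne_iff.mp hune
      exact ⟨i, Finset.mem_univ i, (vert_term (hu i) (hv i)).2 hi⟩
  · intro _
    rw [hval, φC_emb₂]
    have h1 : ∑ i, (0 : Fin j → ℝ) i * y i = 0 := by simp
    rw [h1]
    have : (0:ℝ) < (j:ℝ) + 1 := by positivity
    linarith

/-! Constructed facets: cube ⋈ (cross-polytope facet) -/

def sgn (s : Fin j → Bool) (i : Fin j) : ℝ := cond (s i) 1 (-1)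

lemma sgn_sq (s : Fin j → Bool) (i : Fin j) : sgn s i * sgn s i = 1 := by
  cases h : s i <;> simp [sgn, h]

lemma sgn_ne (s : Fin j → Bool) (i : Fin j) : sgn s i ≠ 0 := by
  cases h : s i <;> simp [sgn, h]

noncomputable def ℓF (s : Fin j → Bool) : Ej j →L[ℝ] ℝ := φC 0 (sgn s) (-1)

noncomputable def Fs (j : ℕ) (s : Fin j → Bool) : Set (Ej j) :=
  {x ∈ Qset j | ∀ y ∈ Qset j, ℓF s y ≤ ℓF s x}

def crossPt (s : Fin j → Bool) (i : Fin j) : Fin j → ℝ := sgn s i • (Pi.single i 1 : Fin j → ℝ)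

lemma crossPt_mem (s : Fin j → Bool) (i : Fin j) : crossPt s i ∈ crossV j := by
  simpa [crossPt, sgn] using smul_single_mem_crossV i (s i)

lemma sum_mul_single_val (b : Fin j → ℝ) (i : Fin j) (τ : ℝ) :
    (∑ i', b i' * (τ • (Pi.single i 1 : Fin j → ℝ)) i') = τ * b i :=
  sum_mul_smul_single b i τ

lemma ℓF_emb₁ (s : Fin j → Bool) (u : Fin j → ℝ) : ℓF s (joinEmb₁ u) = 0 := by
  rw [ℓF, φC_emb₁]
  simp

lemma ℓF_emb₂_smul (s : Fin j → Bool) (i : Fin j) (τ : ℝ) :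
    ℓF s (joinEmb₂ (τ • (Pi.single i 1 : Fin j → ℝ))) = τ * sgn s i - 1 := by
  rw [ℓF, φC_emb₂, sum_mul_single_val]
  ring

lemma ℓF_genV_le (s : Fin j → Bool) : ∀ w ∈ genV j, ℓF s w ≤ 0 := by
  rintro w (⟨u, hu, rfl⟩ | ⟨y, hy, rfl⟩)
  · rw [ℓF_emb₁]
  · obtain ⟨i, h | h⟩ := hy
    · have : y = (1:ℝ) • (Pi.single i 1 : Fin j → ℝ) := by rw [one_smul]; exact h
      rw [this, ℓF_emb₂_smul]
      cases hsi : s i <;> simp [sgn, hsi] <;> norm_num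
    · have : y = (-1:ℝ) • (Pi.single i 1 : Fin j → ℝ) := by rw [neg_smul, one_smul]; exact h
      rw [this, ℓF_emb₂_smul]
      cases hsi : s i <;> simp [sgn, hsi] <;> norm_num
  
lemma ℓF_Q_le (s : Fin j → Bool) : ∀ p ∈ Qset j, ℓF s p ≤ 0 :=
  hull_le _ (ℓF_genV_le s)

lemma ℓF_eq_zero_of_mem {s : Fin j → Bool} {p : Ej j} (hp : p ∈ Fs j s) : ℓF s p = 0 := by
  refine le_antisymm (ℓF_Q_le s p hp.1) ?_
  have := hp.2 0 zero_mem_Q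
  rw [map_zero] at this
  exact this

lemma cube_sub_Fs (s : Fin j → Bool) {v : Fin j → ℝ} (hv : v ∈ cubeV j) :
    joinEmb₁ v ∈ Fs j s :=
  ⟨emb₁_mem_Q hv, fun y hy => by rw [ℓF_emb₁]; exact ℓF_Q_le s y hy⟩

lemma crossPt_mem_Fs (s : Fin j → Bool) (i : Fin j) : joinEmb₂ (crossPt s i) ∈ Fs j s := by
  refine ⟨emb₂_mem_Q (crossPt_mem s i), fun y hy => ?_⟩
  rw [crossPt, ℓF_emb₂_smul, sgn_sq s i]
  simpa using ℓF_Q_le s y hy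

lemma zero_mem_Fs (s : Fin j → Bool) : (0 : Ej j) ∈ Fs j s :=
  joinEmb₁_zero ▸ cube_sub_Fs s zero_mem_cubeV

/-- The independent family spanning the facet direction. -/
noncomputable def βfam (s : Fin j → Bool) : Fin j ⊕ Fin j → Ej j :=
  Sum.elim (fun i => ((Pi.single i 1 : Fin j → ℝ), (0 : Fin j → ℝ), (0:ℝ)))
    (fun i => ((0 : Fin j → ℝ), crossPt s i, (1:ℝ)))

lemma βfam_indep (s : Fin j → Bool) : LinearIndependent ℝ (βfam s) := by
  rw [Fintype.linearIndependent_iff]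
  intro g hg
  have hg' : (∑ i, g (Sum.inl i) • βfam s (Sum.inl i))
      + (∑ i, g (Sum.inr i) • βfam s (Sum.inr i)) = 0 := by
    rw [Fintype.sum_sum_type] at hg; exact hg
  have hfst : (∑ i, g (Sum.inl i) • (Pi.single i 1 : Fin j → ℝ)) = 0 := by
    have := congrArg Prod.fst hg'
    simpa [βfam, Prod.fst_sum] using this
  have hsnd : (∑ i, g (Sum.inr i) • crossPt s i) = 0 := by
    have := congrArg (fun p : Ej j => p.2.1) hg'
    simpa [βfam, Prod.fst_sum, Prod.snd_sum] using this
  intro x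
  rcases x with i | i
  · have := congrFun hfst i
    simpa [Finset.sum_apply, Pi.single_apply] using this
  · have := congrFun hsnd i
    simp only [Finset.sum_apply, crossPt, Pi.smul_apply, smul_eq_mul, Pi.single_apply] at this
    have h2 : g (Sum.inr i) * sgn s i = 0 := by
      rw [Finset.sum_eq_single i] at this
      · simpa [mul_assoc] using this
      · intro b _ hb
        simp [if_neg (Ne.symm hb)]
      · simp
    rcases mul_eq_zero.mp h2 with h | h
    · exact h
    · exact absurd h (sgn_ne s i)

lemma Fs_mem_facets (hj : 3 ≤ j) (s : Fin j → Bool) : Fs j s ∈ ambientFacets (Qset j) := by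
  have hj0 : 0 < j := by omega
  have hexp : IsExposed ℝ (Qset j) (Fs j s) := fun _ => ⟨ℓF s, rfl⟩
  have hne : (Fs j s).Nonempty := ⟨0, zero_mem_Fs s⟩
  have hneQ : Fs j s ≠ Qset j := by
    intro h
    set i0 : Fin j := ⟨0, hj0⟩
    have hmem : joinEmb₂ ((-sgn s i0) • (Pi.single i0 1 : Fin j → ℝ)) ∈ Qset j := by
      apply emb₂_mem_Q
      refine ⟨i0, ?_⟩
      cases h0 : s i0
      · left; simp [sgn, h0]
      · right; simp [sgn, h0]
    rw [← h] at hmem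
    have := ℓF_eq_zero_of_mem hmem
    rw [ℓF_emb₂_smul] at this
    have hsq := sgn_sq s i0
    nlinarith
  have hup : finrank ℝ (vectorSpan ℝ (Fs j s)) ≤ 2*j := by
    have hker : vectorSpan ℝ (Fs j s) ≤ LinearMap.ker (ℓF s).toLinearMap :=
      vectorSpan_le_ker _ 0 fun p hp => ℓF_eq_zero_of_mem hp
    have hsurj : LinearMap.range (ℓF s).toLinearMap = ⊤ := by
      rw [LinearMap.range_eq_top]
      intro z
      refine ⟨((0 : Fin j → ℝ), (0 : Fin j → ℝ), -z), ?_⟩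
      show ℓF s ((0 : Fin j → ℝ), (0 : Fin j → ℝ), -z) = z
      rw [ℓF, φC_apply]
      simp
    have := finrank_le_of_le_ker (ℓF s).toLinearMap hsurj hker
    rwa [finrank_Ej, finrank_self] at this
  have hlow : 2*j ≤ finrank ℝ (vectorSpan ℝ (Fs j s)) := by
    have hspan : Submodule.span ℝ (Set.range (βfam s)) ≤ vectorSpan ℝ (Fs j s) := by
      rw [Submodule.span_le]
      rintro x ⟨i, rfl⟩
      rcases i with i | i
      · have := vsub_mem_vectorSpan ℝ (cube_sub_Fs s (single_mem_cubeV i)) (zero_mem_Fs s)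
        simpa [βfam, joinEmb₁] using this
      · have := vsub_mem_vectorSpan ℝ (crossPt_mem_Fs s i) (zero_mem_Fs s)
        simpa [βfam, joinEmb₂] using this
    have hcard := finrank_span_eq_card (βfam_indep s)
    have := Submodule.finrank_mono hspan
    rw [hcard] at this
    simpa [Fintype.card_sum, two_mul] using this
  refine ⟨⟨hexp, hne, hneQ⟩, ?_⟩
  rw [polyDim, direction_affineSpan, finrank_Ej, Nat.add_sub_cancel]
  exact le_antisymm hup hlow

lemma Fs_injective (hj : 3 ≤ j) : Function.Injective (Fs j) := by
  intro s s' h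
  funext i
  by_contra hne
  have h1 : joinEmb₂ (crossPt s i) ∈ Fs j s' := h ▸ crossPt_mem_Fs s i
  have h2 := ℓF_eq_zero_of_mem h1
  rw [crossPt, ℓF_emb₂_smul] at h2
  have hprod : sgn s i * sgn s' i = -1 := by
    cases ha : s i <;> cases hb : s' i
    · exact absurd (ha.trans hb.symm) hne
    · norm_num [sgn, ha, hb]
    · norm_num [sgn, ha, hb]
    · exact absurd (ha.trans hb.symm) hne
  nlinarith

/-! Cube-type facets Gset -/

def θv (ε : Bool) : ℝ := cond ε 1 0

def Gset (j : ℕ) (k : Fin j) (ε : Bool) : Set (Ej j) :=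
  convexHull ℝ (joinEmb₁ '' {v ∈ cubeV j | v k = θv ε} ∪ joinEmb₂ '' crossV j)

lemma single_dot (l : Fin j) (x : Fin j → ℝ) :
    ∑ i, (Pi.single l 1 : Fin j → ℝ) i * x i = x l := by
  rw [Finset.sum_eq_single l]
  · simp
  · intro b _ hb
    simp [Pi.single_apply, hb]
  · simp

lemma φL_emb₁ (a b : Fin j → ℝ) (c : ℝ) (v : Fin j → ℝ) :
    φL a b c (joinEmb₁ v) = ∑ i, a i * v i :=
  φC_emb₁ a b c v

lemma φL_emb₂ (a b : Fin j → ℝ) (c : ℝ) (y : Fin j → ℝ) :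
    φL a b c (joinEmb₂ y) = (∑ i, b i * y i) + c :=
  φC_emb₂ a b c y

lemma φL_apply' (a b : Fin j → ℝ) (c : ℝ) (p : Ej j) :
    φL a b c p = (∑ i, a i * p.1 i) + ((∑ i, b i * p.2.1 i) + c * p.2.2) := rfl

lemma Gset_subset_hyper (k : Fin j) (ε : Bool) :
    Gset j k ε ⊆ {p : Ej j | p.1 k + θv ε * p.2.2 = θv ε} := by
  have hlin : IsLinearMap ℝ (fun p : Ej j => p.1 k + θv ε * p.2.2) := by
    constructor
    · intro p q; simp; ring
    · intro r p; simp; ring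
  apply convexHull_min _ (convex_hyperplane hlin (θv ε))
  rintro p (⟨v, ⟨hv, hvk⟩, rfl⟩ | ⟨y, hy, rfl⟩)
  · simp [joinEmb₁, hvk]
  · simp [joinEmb₂]

lemma mem_Gset_cube {k : Fin j} {ε : Bool} {v : Fin j → ℝ} (hv : v ∈ cubeV j)
    (hk : v k = θv ε) : joinEmb₁ v ∈ Gset j k ε :=
  subset_convexHull ℝ _ (Or.inl ⟨v, ⟨hv, hk⟩, rfl⟩)

lemma Gset_injective {k k' : Fin j} {ε ε' : Bool} (h : Gset j k ε = Gset j k' ε') :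
    k = k' ∧ ε = ε' := by
  by_contra hcon
  have hv : ∃ v ∈ cubeV j, v k = θv ε ∧ v k' ≠ θv ε' := by
    rcases eq_or_ne k k' with rfl | hkk
    · have hee : ε ≠ ε' := by tauto
      refine ⟨fun _ => θv ε, fun i => ?_, rfl, ?_⟩
      · cases ε <;> simp [θv]
      · cases ε <;> cases ε' <;> simp_all [θv] <;> norm_num
    · refine ⟨fun i => if i = k then θv ε else if i = k' then 1 - θv ε' else 0, ?_, ?_, ?_⟩
      · intro i
        by_cases h1 : i = k
        · cases ε <;> simp [h1, θv]
        · by_cases h2 : i = k'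
          · cases ε' <;> simp [h1, h2, θv, Ne.symm hkk] <;> norm_num
          · simp [h1, h2]
      · simp
      · show (if k' = k then θv ε else if k' = k' then 1 - θv ε' else 0) ≠ θv ε'
        rw [if_neg (Ne.symm hkk), if_pos rfl]
        cases ε' <;> norm_num [θv]
  obtain ⟨v, hvc, hk, hk'⟩ := hv
  have hmem := Gset_subset_hyper k' ε' (h ▸ mem_Gset_cube hvc hk)
  simp only [joinEmb₁, Set.mem_setOf_eq, mul_zero, add_zero] at hmem
  exact hk' hmem

/-! Classification of facets missing a cube vertex -/

lemma facet_classified (hj : 3 ≤ j) {F : Set (Ej j)}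
    (hF : F ∈ ambientFacets (Qset j)) {v₀ : Fin j → ℝ} (hv₀ : v₀ ∈ cubeV j)
    (hmiss : joinEmb₁ v₀ ∉ F) : ∃ k ε, F = Gset j k ε := by
  obtain ⟨⟨hexp, hne, hneQ⟩, hdim⟩ := hF
  obtain ⟨ℓ, hℓ⟩ := hexp hne
  have hVne : (genV j).Nonempty := ⟨joinEmb₁ 0, Or.inl ⟨0, zero_mem_cubeV, rfl⟩⟩
  obtain ⟨w₀, hw₀V, hw₀max⟩ := Set.exists_max_image (genV j) ℓ genV_finite hVne
  set M := ℓ w₀ with hMdef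
  have hface : F = convexHull ℝ {w ∈ genV j | ℓ w = M} := by
    rw [hℓ]
    exact face_eq_hull_argmax genV_finite ℓ ⟨w₀, hw₀V, rfl⟩ hw₀max
  set a := fun i => ℓ ((Pi.single i 1 : Fin j → ℝ), (0:Fin j → ℝ), (0:ℝ)) with hadef
  set b := fun i => ℓ ((0:Fin j → ℝ), (Pi.single i 1 : Fin j → ℝ), (0:ℝ)) with hbdef
  set c := ℓ ((0:Fin j → ℝ), (0:Fin j → ℝ), (1:ℝ)) with hcdef
  have hval₁ : ∀ u, ℓ (joinEmb₁ u) = ∑ i, a i * u i := fun u => by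
    rw [repr_CLM ℓ (joinEmb₁ u), φC_emb₁]
  have hval₂ : ∀ y, ℓ (joinEmb₂ y) = (∑ i, b i * y i) + c := fun y => by
    rw [repr_CLM ℓ (joinEmb₂ y), φC_emb₂]
  set A₀ := {v ∈ cubeV j | ℓ (joinEmb₁ v) = M} with hA₀def
  set A₁ := {y ∈ crossV j | ℓ (joinEmb₂ y) = M} with hA₁def
  set Aset := joinEmb₁ '' A₀ ∪ joinEmb₂ '' A₁ with hAsetdef
  have hA : {w ∈ genV j | ℓ w = M} = Aset := by
    ext w
    constructor
    · rintro ⟨⟨u, hu, rfl⟩ | ⟨y, hy, rfl⟩, hw⟩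
      · exact Or.inl ⟨u, ⟨hu, hw⟩, rfl⟩
      · exact Or.inr ⟨y, ⟨hy, hw⟩, rfl⟩
    · rintro (⟨u, ⟨hu, hm⟩, rfl⟩ | ⟨y, ⟨hy, hm⟩, rfl⟩)
      · exact ⟨Or.inl ⟨u, hu, rfl⟩, hm⟩
      · exact ⟨Or.inr ⟨y, hy, rfl⟩, hm⟩
  have hfaceA : F = convexHull ℝ Aset := by rw [hface, hA]
  have hdimA : finrank ℝ (vectorSpan ℝ Aset) = 2*j := by
    have h1 : vectorSpan ℝ F = vectorSpan ℝ Aset := by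
      rw [hfaceA, ← direction_affineSpan, ← direction_affineSpan, affineSpan_convexHull]
    rw [polyDim, direction_affineSpan, finrank_Ej, h1] at hdim
    exact hdim.trans (Nat.add_sub_cancel _ _)
  have hkill : ∀ (ψ₁ ψ₂ : Ej j →ₗ[ℝ] ℝ) (w₁ w₂ : ℝ),
      (∀ p ∈ Aset, ψ₁ p = w₁) → (∀ p ∈ Aset, ψ₂ p = w₂) →
      ∀ (p q : Ej j), ψ₁ p * ψ₂ q - ψ₁ q * ψ₂ p ≠ 0 → False := by
    intro ψ₁ ψ₂ w₁ w₂ hc₁ hc₂ p q hdet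
    have h₁ := vectorSpan_le_ker ψ₁ w₁ hc₁
    have h₂ := vectorSpan_le_ker ψ₂ w₂ hc₂
    have hle := finrank_le_of_two_functionals ψ₁ ψ₂ h₁ h₂ p q hdet
    have h2j := le_of_eq_of_le hdimA.symm hle
    rw [finrank_Ej] at h2j
    omega
  -- A₀ nonempty
  have hA₀ne : A₀.Nonempty := by
    by_contra hA0
    rw [Set.not_nonempty_iff_eq_empty] at hA0
    set g : Ej j →ₗ[ℝ] (Fin j → ℝ) × ℝ :=
      LinearMap.prod (LinearMap.fst ℝ (Fin j → ℝ) ((Fin j → ℝ) × ℝ))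
        ((LinearMap.snd ℝ (Fin j → ℝ) ℝ).comp (LinearMap.snd ℝ (Fin j → ℝ) ((Fin j → ℝ) × ℝ)))
      with hgdef
    have hconst : ∀ p ∈ Aset, g p = ((0 : Fin j → ℝ), (1:ℝ)) := by
      rintro p (⟨u, hu, rfl⟩ | ⟨y, hy, rfl⟩)
      · rw [hA0] at hu; exact absurd hu (Set.notMem_empty u)
      · rfl
    have hker := vectorSpan_le_ker g _ hconst
    have hsurj : LinearMap.range g = ⊤ := by
      rw [LinearMap.range_eq_top]
      intro z
      exact ⟨(z.1, 0, z.2), rfl⟩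
    have hle := finrank_le_of_le_ker g hsurj hker
    have h2j := le_of_eq_of_le hdimA.symm hle
    rw [finrank_Ej, Module.finrank_prod, Module.finrank_pi, Module.finrank_self,
      Fintype.card_fin] at h2j
    omega
  -- A₁ nonempty
  have hA₁ne : A₁.Nonempty := by
    by_contra hA1
    rw [Set.not_nonempty_iff_eq_empty] at hA1
    set g : Ej j →ₗ[ℝ] (Fin j → ℝ) × ℝ :=
      LinearMap.prod
        ((LinearMap.fst ℝ (Fin j → ℝ) ℝ).comp (LinearMap.snd ℝ (Fin j → ℝ) ((Fin j → ℝ) × ℝ)))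
        ((LinearMap.snd ℝ (Fin j → ℝ) ℝ).comp (LinearMap.snd ℝ (Fin j → ℝ) ((Fin j → ℝ) × ℝ)))
      with hgdef
    have hconst : ∀ p ∈ Aset, g p = ((0 : Fin j → ℝ), (0:ℝ)) := by
      rintro p (⟨u, hu, rfl⟩ | ⟨y, hy, rfl⟩)
      · rfl
      · rw [hA1] at hy; exact absurd hy (Set.notMem_empty y)
    have hker := vectorSpan_le_ker g _ hconst
    have hsurj : LinearMap.range g = ⊤ := by
      rw [LinearMap.range_eq_top]
      intro z
      exact ⟨(0, z.1, z.2), rfl⟩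
    have hle := finrank_le_of_le_ker g hsurj hker
    have h2j := le_of_eq_of_le hdimA.symm hle
    rw [finrank_Ej, Module.finrank_prod, Module.finrank_pi, Module.finrank_self,
      Fintype.card_fin] at h2j
    omega
  obtain ⟨u₀, hu₀⟩ := hA₀ne
  have hMcube : M = ∑ i, max (a i) 0 := by
    have h1 : ∑ i, a i * u₀ i = M := by rw [← hval₁]; exact hu₀.2
    have hle2 : ∑ i, a i * u₀ i ≤ ∑ i, max (a i) 0 := cube_le a hu₀.1
    have hge : ∑ i, max (a i) 0 ≤ M := by
      have hw := hw₀max _ (Or.inl ⟨_, vstar_mem a, rfl⟩)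
      rwa [hval₁, vstar_val] at hw
    linarith
  have hA₀char : ∀ v, v ∈ A₀ ↔ v ∈ cubeV j ∧ ∀ i, (0 < a i → v i = 1) ∧ (a i < 0 → v i = 0) := by
    intro v
    constructor
    · rintro ⟨hv, hm⟩
      rw [hval₁, hMcube] at hm
      exact ⟨hv, (cube_eq_iff a hv).1 hm⟩
    · rintro ⟨hv, hcond⟩
      exact ⟨hv, by rw [hval₁, hMcube]; exact (cube_eq_iff a hv).2 hcond⟩
  have hv₀A : v₀ ∉ A₀ := fun h =>
    hmiss (by rw [hfaceA]; exact subset_convexHull ℝ _ (Or.inl ⟨v₀, h, rfl⟩))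
  obtain ⟨k, hk⟩ : ∃ k, a k ≠ 0 := by
    by_contra h
    push_neg at h
    exact hv₀A ((hA₀char v₀).2 ⟨hv₀, fun i =>
      ⟨fun hpos => absurd (h i) (ne_of_gt hpos), fun hneg => absurd (h i) (ne_of_lt hneg)⟩⟩)
  set θa := fun l => if 0 < a l then (1:ℝ) else 0 with hθadef
  have hψval : ∀ l (p : Ej j), φL (Pi.single l 1) 0 (θa l) p = p.1 l + θa l * p.2.2 := by
    intro l p
    rw [φL_apply', single_dot]
    simp
  have hψconst : ∀ l, a l ≠ 0 → ∀ p ∈ Aset, φL (Pi.single l 1) 0 (θa l) p = θa l := by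
    rintro l hl p (⟨u, hu, rfl⟩ | ⟨y, hy, rfl⟩)
    · rw [hψval]
      show u l + θa l * 0 = θa l
      rw [mul_zero, add_zero]
      have hchar := ((hA₀char u).1 hu).2 l
      rcases lt_trichotomy (a l) 0 with h | h | h
      · rw [hchar.2 h, hθadef]; simp [not_lt.mpr h.le, h.not_gt]
      · exact absurd h hl
      · rw [hchar.1 h, hθadef]; simp [h]
    · rw [hψval]
      show (0 : Fin j → ℝ) l + θa l * 1 = θa l
      simp
  have honlyk : ∀ l, l ≠ k → a l = 0 := by
    intro l hl
    by_contra hal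
    refine hkill (φL (Pi.single k 1) 0 (θa k)) (φL (Pi.single l 1) 0 (θa l)) _ _
      (hψconst k hk) (hψconst l hal)
      (joinEmb₁ (Pi.single k 1)) (joinEmb₁ (Pi.single l 1)) ?_
    have e1 : φL (Pi.single k 1) 0 (θa k) (joinEmb₁ (Pi.single k 1)) = 1 := by
      rw [hψval]; simp [joinEmb₁]
    have e2 : φL (Pi.single l 1) 0 (θa l) (joinEmb₁ (Pi.single l 1)) = 1 := by
      rw [hψval]; simp [joinEmb₁]
    have e3 : φL (Pi.single k 1) 0 (θa k) (joinEmb₁ (Pi.single l 1)) = 0 := by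
      rw [hψval]; simp [joinEmb₁, Pi.single_eq_of_ne (Ne.symm hl)]
    have e4 : φL (Pi.single l 1) 0 (θa l) (joinEmb₁ (Pi.single k 1)) = 0 := by
      rw [hψval]; simp [joinEmb₁, Pi.single_eq_of_ne hl]
    rw [e1, e2, e3, e4]
    norm_num
  have hb0 : ∀ r, b r = 0 := by
    intro r
    by_contra hbr
    have hχconst : ∀ p ∈ Aset, φL 0 b (c - M) p = 0 := by
      rintro p (⟨u, hu, rfl⟩ | ⟨y, hy, rfl⟩)
      · rw [φL_emb₁]; simp
      · rw [φL_emb₂]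
        have := hy.2
        rw [hval₂] at this
        linarith
    refine hkill (φL 0 b (c - M)) (φL (Pi.single k 1) 0 (θa k)) 0 (θa k)
      hχconst (hψconst k hk)
      ((0 : Fin j → ℝ), (Pi.single r 1 : Fin j → ℝ), (0:ℝ)) (joinEmb₁ (Pi.single k 1)) ?_
    have hsum : ∑ i, b i * (Pi.single r 1 : Fin j → ℝ) i = b r := by
      have h := sum_mul_smul_single b r 1
      rwa [one_smul, one_mul] at h
    have e1 : φL 0 b (c - M) (((0 : Fin j → ℝ), (Pi.single r 1 : Fin j → ℝ), (0:ℝ)) : Ej j)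
        = b r := by
      rw [φL_apply']
      simp only [Pi.zero_apply, zero_mul, Finset.sum_const_zero, mul_zero, add_zero, zero_add]
      exact hsum
    have e2 : φL 0 b (c - M) (joinEmb₁ (Pi.single k 1)) = 0 := by
      rw [φL_emb₁]; simp
    have e3 : φL (Pi.single k 1) 0 (θa k)
        (((0 : Fin j → ℝ), (Pi.single r 1 : Fin j → ℝ), (0:ℝ)) : Ej j) = 0 := by
      rw [hψval]; simp
    have e4 : φL (Pi.single k 1) 0 (θa k) (joinEmb₁ (Pi.single k 1)) = 1 := by
      rw [hψval]; simp [joinEmb₁]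
    rw [e1, e2, e3, e4]
    simpa using hbr
  obtain ⟨y₀, hy₀⟩ := hA₁ne
  have hcM : c = M := by
    have h2 := hy₀.2
    rw [hval₂] at h2
    have hz : ∑ i, b i * y₀ i = 0 := Finset.sum_eq_zero fun i _ => by rw [hb0 i, zero_mul]
    linarith
  have hA₁all : A₁ = crossV j := by
    ext y
    constructor
    · exact fun h => h.1
    · intro hy
      refine ⟨hy, ?_⟩
      rw [hval₂]
      have hz : ∑ i, b i * y i = 0 := Finset.sum_eq_zero fun i _ => by rw [hb0 i, zero_mul]
      rw [hz, zero_add, hcM]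
  have hA₀eq : A₀ = {v ∈ cubeV j | v k = θa k} := by
    ext v
    rw [hA₀char]
    constructor
    · rintro ⟨hv, hcond⟩
      refine ⟨hv, ?_⟩
      rcases lt_trichotomy (a k) 0 with h | h | h
      · rw [(hcond k).2 h, hθadef]; simp [h.not_gt]
      · exact absurd h hk
      · rw [(hcond k).1 h, hθadef]; simp [h]
    · rintro ⟨hv, hvk⟩
      refine ⟨hv, fun i => ?_⟩
      rcases eq_or_ne i k with rfl | hik
      · constructor
        · intro hpos; rw [hvk, hθadef]; simp [hpos]
        · intro hneg; rw [hvk, hθadef]; simp [hneg.not_gt]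
      · rw [honlyk i hik]
        exact ⟨fun h => absurd h (lt_irrefl 0), fun h => absurd h (lt_irrefl 0)⟩
  refine ⟨k, decide (0 < a k), ?_⟩
  have hθ : θa k = θv (decide (0 < a k)) := by
    by_cases h : 0 < a k <;> simp [hθadef, θv, h]
  rw [hfaceA, hAsetdef, hA₀eq, hA₁all, hθ, Gset]

lemma two_mul_lt_two_pow (n : ℕ) (hn : 3 ≤ n) : 2*n < 2^n := by
  induction n, hn using Nat.le_induction with
  | base => norm_num
  | succ m hm ih =>
    have h2 : 2 ≤ 2^m := by
      calc (2:ℕ) = 2^1 := by norm_num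
      _ ≤ 2^m := Nat.pow_le_pow_right (by norm_num) (by omega)
    rw [pow_succ]
    omega

lemma no_vfa (hj : 3 ≤ j) : ¬ HasVFA (Qset j) := by
  intro h
  rcases h with ⟨f, hfinj, hfmiss⟩ | ⟨g, hginj, hgmiss⟩
  · -- injective map from vertices to non-incident facets
    have hvtxcube : ∀ s : Fin j → Bool, (fun i => (cond (s i) 1 0 : ℝ)) ∈ cubeV j :=
      fun s i => by cases hsi : s i <;> simp [hsi]
    have hvtxext : ∀ s : Fin j → Bool,
        joinEmb₁ (fun i => (cond (s i) 1 0 : ℝ)) ∈ (Qset j).extremePoints ℝ :=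
      fun s => extreme_cube_vertex (hvtxcube s)
    have hcls : ∀ s : Fin j → Bool, ∃ k ε,
        (f ⟨joinEmb₁ (fun i => (cond (s i) 1 0 : ℝ)), hvtxext s⟩ : Set (Ej j)) = Gset j k ε := by
      intro s
      exact facet_classified hj (f _).2 (hvtxcube s) (hfmiss _)
    choose K Eps hKE using hcls
    have hinj : Function.Injective (fun s => (K s, Eps s)) := by
      intro s s' hss
      rw [Prod.mk.injEq] at hss
      have h1 : Gset j (K s) (Eps s) = Gset j (K s') (Eps s') := by rw [hss.1, hss.2]
      have h2 : (f ⟨joinEmb₁ (fun i => (cond (s i) 1 0 : ℝ)), hvtxext s⟩ : Set (Ej j))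
          = (f ⟨joinEmb₁ (fun i => (cond (s' i) 1 0 : ℝ)), hvtxext s'⟩ : Set (Ej j)) := by
        rw [hKE, hKE, h1]
      have h3 := hfinj (Subtype.ext h2)
      have h4 : (joinEmb₁ (fun i => (cond (s i) 1 0 : ℝ)) : Ej j)
          = (joinEmb₁ (fun i => (cond (s' i) 1 0 : ℝ)) : Ej j) := by
        have := congrArg Subtype.val h3
        simpa using this
      funext i
      have h5 : (cond (s i) 1 0 : ℝ) = cond (s' i) 1 0 := by
        have := congrFun (congrArg Prod.fst h4) i
        simpa [joinEmb₁] using this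
      cases hsi : s i <;> cases hsi' : s' i <;> rw [hsi, hsi'] at h5 <;> first
        | rfl
        | (exfalso; norm_num at h5)
    have hcard := Fintype.card_le_of_injective _ hinj
    rw [Fintype.card_fun, Fintype.card_prod, Fintype.card_bool, Fintype.card_fin] at hcard
    have := two_mul_lt_two_pow j hj
    omega
  · -- injective map from facets to non-incident vertices
    have hfacet : ∀ s : Fin j → Bool, Fs j s ∈ ambientFacets (Qset j) := Fs_mem_facets hj
    have hmem2 : ∀ s : Fin j → Bool,
        ((g ⟨Fs j s, hfacet s⟩ : Ej j)) ∈ joinEmb₂ '' crossV j := by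
      intro s
      have hxV : ((g ⟨Fs j s, hfacet s⟩ : Ej j)) ∈ genV j :=
        extremePoints_convexHull_subset (g ⟨Fs j s, hfacet s⟩).2
      rcases hxV with ⟨u, hu, hequ⟩ | h2
      · exfalso
        apply hgmiss ⟨Fs j s, hfacet s⟩
        rw [← hequ]
        exact cube_sub_Fs s hu
      · exact h2
    have hdata : ∀ s : Fin j → Bool, ∃ (i : Fin j) (bb : Bool),
        ((g ⟨Fs j s, hfacet s⟩ : Ej j))
          = joinEmb₂ ((cond bb 1 (-1) : ℝ) • (Pi.single i 1 : Fin j → ℝ)) := by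
      intro s
      obtain ⟨y, hy, hey⟩ := hmem2 s
      obtain ⟨i, hc | hc⟩ := hy
      · refine ⟨i, true, ?_⟩
        rw [← hey, hc]
        simp
      · refine ⟨i, false, ?_⟩
        rw [← hey, hc]
        simp
    choose I B hIB using hdata
    have hinj : Function.Injective (fun s => (I s, B s)) := by
      intro s s' hss
      rw [Prod.mk.injEq] at hss
      have h1 : ((g ⟨Fs j s, hfacet s⟩ : Ej j)) = ((g ⟨Fs j s', hfacet s'⟩ : Ej j)) := by
        rw [hIB, hIB, hss.1, hss.2]
      have h2 := hginj (Subtype.ext h1)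
      have h3 : Fs j s = Fs j s' := by
        have := congrArg Subtype.val h2
        simpa using this
      exact Fs_injective hj h3
    have hcard := Fintype.card_le_of_injective _ hinj
    rw [Fintype.card_fun, Fintype.card_prod, Fintype.card_bool, Fintype.card_fin] at hcard
    have := two_mul_lt_two_pow j hj
    omega

end CJC

/-- For `j ≥ 3`, the free join of the `j`-cube `[0,1]^j` and the
`j`-dimensional cross-polytope is a full-dimensional polytope in `ℝ^{2j+1}` without a
vertex-facet assignment. -/
theorem cube_join_crosspolytope_no_vfa (j : ℕ) (hj : 3 ≤ j) :
    IsPolytope (freeJoin {x : Fin j → ℝ | ∀ i, x i ∈ Set.Icc (0 : ℝ) 1}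
        (convexHull ℝ {x : Fin j → ℝ | ∃ i, x = Pi.single i 1 ∨ x = -Pi.single i 1})) ∧
    affineSpan ℝ (freeJoin {x : Fin j → ℝ | ∀ i, x i ∈ Set.Icc (0 : ℝ) 1}
        (convexHull ℝ {x : Fin j → ℝ | ∃ i, x = Pi.single i 1 ∨ x = -Pi.single i 1})) = ⊤ ∧
    ¬ HasVFA (freeJoin {x : Fin j → ℝ | ∀ i, x i ∈ Set.Icc (0 : ℝ) 1}
        (convexHull ℝ {x : Fin j → ℝ | ∃ i, x = Pi.single i 1 ∨ x = -Pi.single i 1})) := by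
  have hQ : freeJoin {x : Fin j → ℝ | ∀ i, x i ∈ Set.Icc (0 : ℝ) 1}
      (convexHull ℝ {x : Fin j → ℝ | ∃ i, x = Pi.single i 1 ∨ x = -Pi.single i 1})
        = CJC.Qset j := CJC.freeJoin_eq
  rw [hQ]
  refine ⟨⟨CJC.genV j, CJC.genV_finite, rfl⟩, CJC.affineSpan_Q_top (by omega), CJC.no_vfa hj⟩
end

section
/- Let P ⊆ ℝ^d be a full-dimensional polytope with f_0(P) ≥ f_{d−1}(P), and suppose P has a vertex-facet assignment. Then for every face σ of P, f_0(σ) + k ≤ f_0(P), where f_0(σ) is the number of vertices of σ and k is the number of facets of P containing σ. -/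
private lemma extremePoints_finite_of_polytope {V : Type*} [NormedAddCommGroup V]
    [NormedSpace ℝ V] {P : Set V} (hP : IsPolytope P) : (P.extremePoints ℝ).Finite := by
  obtain ⟨S, hSfin, rfl⟩ := hP
  exact hSfin.subset extremePoints_convexHull_subset

private lemma face_eq_hull_extremePoints {V : Type*} [NormedAddCommGroup V] [NormedSpace ℝ V]
    {P F : Set V} (hP : IsPolytope P) (hF : IsExposed ℝ P F) :
    F = convexHull ℝ (F.extremePoints ℝ) := by
  obtain ⟨S, hSfin, rfl⟩ := hP
  have hPc : IsCompact (convexHull ℝ S) := hSfin.isCompact_convexHull ℝ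
  have hFc : IsCompact F := hPc.of_isClosed_subset (hF.isClosed hPc.isClosed) hF.subset
  have hFconv : Convex ℝ F := hF.convex (convex_convexHull ℝ S)
  have hfin : (F.extremePoints ℝ).Finite :=
    (hSfin.subset extremePoints_convexHull_subset).subset
      hF.isExtreme.extremePoints_subset_extremePoints
  have h := closure_convexHull_extremePoints hFc hFconv
  rwa [(hfin.isClosed_convexHull ℝ).closure_eq, eq_comm] at h

private lemma ambientFacets_finite {V : Type*} [NormedAddCommGroup V] [NormedSpace ℝ V]
    {P : Set V} (hP : IsPolytope P) : (ambientFacets P).Finite := by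
  have hEfin := extremePoints_finite_of_polytope hP
  refine Set.Finite.of_finite_image (f := fun F => F.extremePoints ℝ) ?_ ?_
  · apply hEfin.finite_subsets.subset
    rintro _ ⟨F, hF, rfl⟩
    exact hF.1.1.isExtreme.extremePoints_subset_extremePoints
  · intro F hF G hG h
    rw [face_eq_hull_extremePoints hP hF.1.1, face_eq_hull_extremePoints hP hG.1.1]
    exact congrArg _ h

/-- If `P` has at least as many vertices as facets and a vertex-facet
assignment, then for every face `σ` of `P`, the number of vertices of `σ` plus the number
of facets of `P` containing `σ` is at most `f₀(P)`. -/
theorem face_estimate_of_vfa {d : ℕ} (P : Set (Fin d → ℝ))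
    (hP : IsPolytope P) (hfull : affineSpan ℝ P = ⊤)
    (hcard : (ambientFacets P).ncard ≤ (P.extremePoints ℝ).ncard)
    (hvfa : HasVFA P) (σ : Set (Fin d → ℝ)) (hσ : IsFaceOf P σ) :
    (σ.extremePoints ℝ).ncard + {F ∈ ambientFacets P | σ ⊆ F}.ncard ≤
      (P.extremePoints ℝ).ncard := by
  classical
  have hEfin : (P.extremePoints ℝ).Finite := extremePoints_finite_of_polytope hP
  have hFacfin : (ambientFacets P).Finite := ambientFacets_finite hP
  set A := σ.extremePoints ℝ with hAdef
  set K := {F ∈ ambientFacets P | σ ⊆ F} with hKdef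
  have hKsub : K ⊆ ambientFacets P := fun F hF => hF.1
  have hAσ : A ⊆ σ := extremePoints_subset
  have hAE : A ⊆ P.extremePoints ℝ := hσ.1.isExtreme.extremePoints_subset_extremePoints
  rcases hvfa with ⟨f, hfinj, hfni⟩ | ⟨g, hginj, hgni⟩
  · -- injective map from vertices to non-incident facets
    have h1 : A.ncard ≤ (ambientFacets P \ K).ncard := by
      refine Set.ncard_le_ncard_of_injOn
        (fun v => if h : v ∈ P.extremePoints ℝ then (f ⟨v, h⟩ : Set (Fin d → ℝ)) else ∅)
        ?_ ?_ (hFacfin.diff)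
      · intro v hv
        simp only [dif_pos (hAE hv)]
        exact ⟨(f ⟨v, hAE hv⟩).2, fun hmem => hfni ⟨v, hAE hv⟩ (hmem.2 (hAσ hv))⟩
      · intro v hv w hw h
        simp only [dif_pos (hAE hv), dif_pos (hAE hw)] at h
        exact congrArg Subtype.val (hfinj (Subtype.ext h))
    calc A.ncard + K.ncard ≤ (ambientFacets P \ K).ncard + K.ncard :=
          Nat.add_le_add_right h1 _
      _ = (ambientFacets P).ncard := Set.ncard_diff_add_ncard_of_subset hKsub hFacfin
      _ ≤ (P.extremePoints ℝ).ncard := hcard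
  · -- injective map from facets to non-incident vertices
    have h2 : K.ncard ≤ ((P.extremePoints ℝ) \ A).ncard := by
      refine Set.ncard_le_ncard_of_injOn
        (fun F => if h : F ∈ ambientFacets P then (g ⟨F, h⟩ : Fin d → ℝ) else 0)
        ?_ ?_ (hEfin.diff)
      · intro F hF
        simp only [dif_pos (hKsub hF)]
        exact ⟨(g ⟨F, hKsub hF⟩).2, fun hmem => hgni ⟨F, hKsub hF⟩ (hF.2 (hAσ hmem))⟩
      · intro F hF G hG h
        simp only [dif_pos (hKsub hF), dif_pos (hKsub hG)] at h
        exact congrArg Subtype.val (hginj (Subtype.ext h))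
    calc A.ncard + K.ncard ≤ A.ncard + ((P.extremePoints ℝ) \ A).ncard :=
          Nat.add_le_add_left h2 _
      _ = ((P.extremePoints ℝ) \ A).ncard + A.ncard := Nat.add_comm _ _
      _ = (P.extremePoints ℝ).ncard := Set.ncard_diff_add_ncard_of_subset hAE hEfin
end
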